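/- arXiv:1305.5856 — 5 statements merged into one kernel-verified Lean document; each statement's English description precedes it below -/
import Mathlib

section
/- For 0 < α < π/2, the Möbius transformation U_α(y) = i·tan(α)·(1 - y)/(1 + y) maps the open cone C_α = {r·e^{it} : r > 0, |t| < α} bijectively onto the lens region Ω_γ where γ = 1/cos(α). -/
open Complex Metric

/-- The open cone of half-angle `α`: {r·e^{it} : r > 0, |t| < α}. -/
def cone (α : ℝ) : Set ℂ :=
  {z : ℂ | ∃ r t : ℝ, 0 < r ∧ |t| < α ∧ z = (r : ℂ) * Complex.exp ((t : ℂ) * I)}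

/-- The open lens region Ω_γ = {s : |1 - s| < γ ∧ |1 + s| < γ}. -/
def lens (γ : ℝ) : Set ℂ := {s : ℂ | ‖1 - s‖ < γ ∧ ‖1 + s‖ < γ}

lemma cone_mem_iff {α : ℝ} (hα : 0 < α) (hα' : α < Real.pi / 2) (y : ℂ) :
    y ∈ cone α ↔ |y.im| < Real.tan α * y.re := by
  have hcos : 0 < Real.cos α := Real.cos_pos_of_mem_Ioo ⟨by linarith [Real.pi_pos], hα'⟩
  have hT : 0 < Real.tan α := Real.tan_pos_of_pos_of_lt_pi_div_two hα hα'
  constructor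
  · rintro ⟨r, t, hr, ht, rfl⟩
    have ht1 : -α < t := (abs_lt.mp ht).1
    have ht2 : t < α := (abs_lt.mp ht).2
    have hre : ((r:ℂ) * Complex.exp ((t:ℂ) * I)).re = r * Real.cos t := by
      rw [Complex.exp_mul_I]
      simp [← Complex.ofReal_cos, ← Complex.ofReal_sin]
    have him : ((r:ℂ) * Complex.exp ((t:ℂ) * I)).im = r * Real.sin t := by
      rw [Complex.exp_mul_I]
      simp [← Complex.ofReal_cos, ← Complex.ofReal_sin]
    rw [hre, him]
    have hs1 : 0 < Real.sin (α - t) := Real.sin_pos_of_pos_of_lt_pi (by linarith)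
      (by linarith [Real.pi_pos])
    have hs2 : 0 < Real.sin (α + t) := Real.sin_pos_of_pos_of_lt_pi (by linarith)
      (by linarith [Real.pi_pos])
    rw [Real.sin_sub] at hs1
    rw [Real.sin_add] at hs2
    have htc : Real.tan α * Real.cos α = Real.sin α := by
      rw [Real.tan_eq_sin_div_cos]; field_simp
    rw [Real.tan_eq_sin_div_cos, div_mul_eq_mul_div, lt_div_iff₀ hcos]
    rw [show |r * Real.sin t| * Real.cos α = |r * Real.sin t * Real.cos α| from by
      rw [abs_mul (r * Real.sin t) (Real.cos α), abs_of_pos hcos], abs_lt]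
    constructor
    · nlinarith [mul_pos hr hs2]
    · nlinarith [mul_pos hr hs1]
  · intro h
    have hx : 0 < y.re := by nlinarith [abs_nonneg y.im]
    have hy0 : y ≠ 0 := fun h0 => by simp [h0] at hx
    refine ⟨‖y‖, Complex.arg y, norm_pos_iff.mpr hy0, ?_,
      (Complex.norm_mul_exp_arg_mul_I y).symm⟩
    by_contra hcon
    push_neg at hcon
    have h1 : Real.cos |Complex.arg y| ≤ Real.cos α :=
      Real.cos_le_cos_of_nonneg_of_le_pi hα.le (Complex.abs_arg_le_pi y) hcon
    rw [Real.cos_abs, Complex.cos_arg hy0] at h1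
    have hr : 0 < ‖y‖ := norm_pos_iff.mpr hy0
    have hsq : (Real.cos α * ‖y‖)^2 < y.re^2 := by
      have habs2 : (‖y‖)^2 = y.re^2 + y.im^2 := by
        rw [Complex.sq_norm, Complex.normSq_apply]; ring
      have hsin : 0 < Real.sin α := Real.sin_pos_of_pos_of_lt_pi hα (by linarith [Real.pi_pos])
      have htc : Real.tan α * Real.cos α = Real.sin α := by
        rw [Real.tan_eq_sin_div_cos]; field_simp
      have h2 : Real.cos α * |y.im| < Real.sin α * y.re := by
        calc Real.cos α * |y.im| < Real.cos α * (Real.tan α * y.re) := by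
              exact mul_lt_mul_of_pos_left h hcos
          _ = Real.sin α * y.re := by rw [← htc]; ring
      have h2sq : (Real.cos α * |y.im|) * (Real.cos α * |y.im|) < (Real.sin α * y.re) * (Real.sin α * y.re) :=
        mul_self_lt_mul_self (by positivity) h2
      have hpyth : Real.sin α ^2 + Real.cos α ^2 = 1 := Real.sin_sq_add_cos_sq α
      have hps : (Real.sin α^2 + Real.cos α^2) * y.re^2 = y.re^2 := by rw [hpyth]; ring
      nlinarith [h2sq, _root_.sq_abs y.im, habs2, hps]
    have h3 : Real.cos α * ‖y‖ < y.re :=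
      lt_of_pow_lt_pow_left₀ 2 hx.le hsq
    rw [div_le_iff₀ hr] at h1
    linarith [h1, h3]

lemma norm_div_lt_iff' (a b : ℂ) (γ : ℝ) (hb : b ≠ 0) (hγ : 0 < γ) :
    ‖a / b‖ < γ ↔ Complex.normSq a < γ^2 * Complex.normSq b := by
  have hbp : 0 < ‖b‖ := norm_pos_iff.mpr hb
  rw [norm_div, div_lt_iff₀ hbp]
  have ha : Complex.normSq a = ‖a‖^2 := by rw [Complex.normSq_eq_norm_sq]
  have hb2 : Complex.normSq b = ‖b‖^2 := by rw [Complex.normSq_eq_norm_sq]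
  rw [ha, hb2]
  constructor
  · intro h; nlinarith [norm_nonneg a]
  · intro h; nlinarith [norm_nonneg a, mul_pos hγ hbp]

lemma lens_mem_iff {α : ℝ} (hα : 0 < α) (hα' : α < Real.pi / 2) (y : ℂ)
    (hy : (1 : ℂ) + y ≠ 0) :
    I * (Real.tan α : ℂ) * (1 - y) / (1 + y) ∈ lens (1 / Real.cos α) ↔
      |y.im| < Real.tan α * y.re := by
  have hcos : 0 < Real.cos α := Real.cos_pos_of_mem_Ioo ⟨by linarith [Real.pi_pos], hα'⟩
  have hT : 0 < Real.tan α := Real.tan_pos_of_pos_of_lt_pi_div_two hα hα'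
  set T := Real.tan α with hTdef
  set γ := 1 / Real.cos α with hγdef
  have hγ : 0 < γ := by positivity
  have hγ2 : γ^2 = 1 + T^2 := by
    have hp := Real.sin_sq_add_cos_sq α
    rw [hγdef, hTdef, Real.tan_eq_sin_div_cos]
    field_simp
    linarith
  have e1 : 1 - I * (T : ℂ) * (1 - y) / (1 + y) = ((1 + y) - I * T * (1 - y)) / (1 + y) := by
    field_simp
  have e2 : 1 + I * (T : ℂ) * (1 - y) / (1 + y) = ((1 + y) + I * T * (1 - y)) / (1 + y) := by
    field_simp
  have key1 : γ^2 * Complex.normSq (1 + y) -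
      Complex.normSq ((1 + y) - I * T * (1 - y)) = 4 * T * (T * y.re + y.im) := by
    simp only [Complex.normSq_apply, Complex.add_re, Complex.add_im, Complex.sub_re,
      Complex.sub_im, Complex.mul_re, Complex.mul_im, Complex.I_re, Complex.I_im,
      Complex.ofReal_re, Complex.ofReal_im, Complex.one_re, Complex.one_im, hγ2]
    ring
  have key2 : γ^2 * Complex.normSq (1 + y) -
      Complex.normSq ((1 + y) + I * T * (1 - y)) = 4 * T * (T * y.re - y.im) := by
    simp only [Complex.normSq_apply, Complex.add_re, Complex.add_im, Complex.sub_re,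
      Complex.sub_im, Complex.mul_re, Complex.mul_im, Complex.I_re, Complex.I_im,
      Complex.ofReal_re, Complex.ofReal_im, Complex.one_re, Complex.one_im, hγ2]
    ring
  have h4T : 0 < 4 * T := by linarith
  constructor
  · rintro ⟨h1, h2⟩
    rw [e1, norm_div_lt_iff' _ _ _ hy hγ] at h1
    rw [e2, norm_div_lt_iff' _ _ _ hy hγ] at h2
    rw [abs_lt]
    constructor
    · nlinarith [key1]
    · nlinarith [key2]
  · intro h
    rw [abs_lt] at h
    constructor
    · rw [e1, norm_div_lt_iff' _ _ _ hy hγ]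
      nlinarith [key1]
    · rw [e2, norm_div_lt_iff' _ _ _ hy hγ]
      nlinarith [key2]

theorem moebius_cone_to_lens (α : ℝ) (hα : 0 < α) (hα' : α < Real.pi / 2) :
    Set.BijOn (fun y : ℂ => I * (Real.tan α : ℂ) * (1 - y) / (1 + y))
      (cone α) (lens (1 / Real.cos α)) := by
  have hcos : 0 < Real.cos α := Real.cos_pos_of_mem_Ioo ⟨by linarith [Real.pi_pos], hα'⟩
  have hT : 0 < Real.tan α := Real.tan_pos_of_pos_of_lt_pi_div_two hα hα'
  have hone : ∀ y : ℂ, y ∈ cone α → (1 : ℂ) + y ≠ 0 := by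
    intro y hy h0
    have hc := (cone_mem_iff hα hα' y).mp hy
    have hx : 0 < y.re := by nlinarith [abs_nonneg y.im]
    have := congrArg Complex.re h0
    simp at this
    linarith
  have hIT : (I * (Real.tan α : ℂ)) ≠ 0 :=
    mul_ne_zero Complex.I_ne_zero (Complex.ofReal_ne_zero.mpr hT.ne')
  refine ⟨?_, ?_, ?_⟩
  · intro y hy
    exact (lens_mem_iff hα hα' y (hone y hy)).mpr ((cone_mem_iff hα hα' y).mp hy)
  · intro a ha b hb hab
    simp only at hab
    rw [div_eq_div_iff (hone a ha) (hone b hb)] at hab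
    have h2 : ((2 : ℂ) * (I * (Real.tan α : ℂ))) ≠ 0 := by
      exact mul_ne_zero two_ne_zero hIT
    have hz : (2 : ℂ) * (I * (Real.tan α : ℂ)) * (b - a) = 0 := by linear_combination hab
    have := (mul_eq_zero.mp hz).resolve_left h2
    exact (sub_eq_zero.mp this).symm
  · intro s hs
    obtain ⟨h1, h2⟩ := hs
    have hγ : 0 < 1 / Real.cos α := by positivity
    have hden : I * (Real.tan α : ℂ) + s ≠ 0 := by
      intro h0
      have hs' : s = -(I * (Real.tan α : ℂ)) := by linear_combination h0
      rw [hs'] at h2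
      have e : ‖(1 : ℂ) + -(I * (Real.tan α : ℂ))‖^2 = (1 / Real.cos α)^2 := by
        rw [Complex.sq_norm]
        have hp := Real.sin_sq_add_cos_sq α
        simp only [Complex.normSq_apply, Complex.add_re, Complex.add_im, Complex.neg_re,
          Complex.neg_im, Complex.mul_re, Complex.mul_im, Complex.I_re, Complex.I_im,
          Complex.ofReal_re, Complex.ofReal_im, Complex.one_re, Complex.one_im,
          Real.tan_eq_sin_div_cos]
        field_simp
        linear_combination hp
      nlinarith [norm_nonneg ((1 : ℂ) + -(I * (Real.tan α : ℂ)))]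
    have gen1 : ∀ a u : ℂ, a + u ≠ 0 → 1 + (a - u) / (a + u) = 2 * a / (a + u) := by
      intro a u hd; field_simp; ring
    have gen2 : ∀ a u : ℂ, a + u ≠ 0 → 1 - (a - u) / (a + u) = 2 * u / (a + u) := by
      intro a u hd; field_simp; ring
    have gen3 : ∀ a d u : ℂ, d ≠ 0 → a ≠ 0 → a * (2 * u / d) / (2 * a / d) = u := by
      intro a d u hd ha; field_simp
    set y : ℂ := (I * (Real.tan α : ℂ) - s) / (I * (Real.tan α : ℂ) + s) with hydef
    have e1y : (1 : ℂ) + y = 2 * (I * (Real.tan α : ℂ)) / (I * (Real.tan α : ℂ) + s) := by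
      rw [hydef]
      exact gen1 _ _ hden
    have h1y : (1 : ℂ) + y ≠ 0 := by
      rw [e1y]
      exact div_ne_zero (mul_ne_zero two_ne_zero hIT) hden
    have e2y : (1 : ℂ) - y = 2 * s / (I * (Real.tan α : ℂ) + s) := by
      rw [hydef]
      exact gen2 _ _ hden
    have himg : I * (Real.tan α : ℂ) * (1 - y) / (1 + y) = s := by
      rw [e2y, e1y]
      exact gen3 _ _ _ hden hIT
    refine ⟨y, ?_, himg⟩
    refine (cone_mem_iff hα hα' y).mpr ((lens_mem_iff hα hα' y h1y).mp ?_)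
    rw [himg]
    exact ⟨h1, h2⟩
end

section
/- For 0 < α < π/2 and γ = 1/cos(α), the function F_γ(w) = i·tan(α)·(1 - ((1+iw)/(1-iw))^{2α/π})/(1 + ((1+iw)/(1-iw))^{2α/π}) is a holomorphic bijection from the open unit disc 𝔻 onto the lens region Ω_γ. -/
open Complex Metric

/-- The conformal map F_γ (with cos α = 1/γ) of the unit disc onto the lens Ω_γ. -/
noncomputable def Fmap (α : ℝ) (w : ℂ) : ℂ :=
  I * (Real.tan α : ℂ) *
    (1 - ((1 + I * w) / (1 - I * w)) ^ ((2 * α / Real.pi : ℝ) : ℂ)) /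
    (1 + ((1 + I * w) / (1 - I * w)) ^ ((2 * α / Real.pi : ℝ) : ℂ))

noncomputable def Cmap (w : ℂ) : ℂ := (1 + I * w) / (1 - I * w)
noncomputable def Cinv (z : ℂ) : ℂ := (z - 1) / (I * (z + 1))
def Hset : Set ℂ := {z : ℂ | 0 < z.re}

lemma norm_lt_norm_iff (a b : ℂ) : ‖a‖ < ‖b‖ ↔ normSq a < normSq b := by
  rw [← Complex.sq_norm, ← Complex.sq_norm]
  exact (pow_lt_pow_iff_left₀ (norm_nonneg _) (norm_nonneg _) two_ne_zero).symm

lemma cayley_denom_ne (w : ℂ) (hw : w ∈ ball (0:ℂ) 1) : 1 - I * w ≠ 0 := by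
  rw [mem_ball_zero_iff] at hw
  intro h
  have : (1:ℂ) = I * w := by linear_combination h
  have h1 : ‖(1:ℂ)‖ = ‖I * w‖ := by rw [this]
  simp [norm_mul] at h1
  rw [h1] at hw; exact lt_irrefl _ hw

lemma cayley_mapsTo : Set.MapsTo Cmap (ball (0:ℂ) 1) Hset := by
  intro w hw
  have hd := cayley_denom_ne w hw
  rw [mem_ball_zero_iff] at hw
  have hn : normSq w < 1 := by
    rw [normSq_eq_norm_sq]
    nlinarith [norm_nonneg w]
  have hpos : 0 < normSq (1 - I * w) := normSq_pos.2 hd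
  show 0 < ((1 + I * w) / (1 - I * w)).re
  rw [div_re]
  have h1 : (1 + I * w).re = 1 - w.im := by simp [sub_eq_add_neg]
  have h2 : (1 + I * w).im = w.re := by simp
  have h3 : (1 - I * w).re = 1 + w.im := by simp
  have h4 : (1 - I * w).im = -w.re := by simp
  rw [h1, h2, h3, h4]
  rw [normSq_apply] at hn
  rw [← add_div, lt_div_iff₀ hpos]
  nlinarith

lemma cayley_inv_mapsTo : Set.MapsTo Cinv Hset (ball (0:ℂ) 1) := by
  intro z hz
  have hz' : 0 < z.re := hz
  have h1 : z + 1 ≠ 0 := by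
    intro h; have : (z+1).re = 0 := by rw [h]; simp
    simp at this; linarith
  rw [mem_ball_zero_iff]
  show ‖(z - 1) / (I * (z + 1))‖ < 1
  rw [norm_div, norm_mul]
  simp only [Complex.norm_I, one_mul]
  rw [div_lt_one (norm_pos_iff.mpr h1)]
  rw [norm_lt_norm_iff]
  simp [normSq_apply]
  nlinarith

lemma cayley_left_inv : ∀ w ∈ ball (0:ℂ) 1, Cinv (Cmap w) = w := by
  intro w hw
  have hd := cayley_denom_ne w hw
  have h2 : Cmap w + 1 ≠ 0 := by
    show (1 + I * w) / (1 - I * w) + 1 ≠ 0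
    rw [div_add_one hd]
    have : 1 + I * w + (1 - I * w) = 2 := by ring
    rw [this]
    exact div_ne_zero two_ne_zero hd
  show (Cmap w - 1) / (I * (Cmap w + 1)) = w
  rw [div_eq_iff (mul_ne_zero I_ne_zero h2)]
  show (1 + I * w) / (1 - I * w) - 1 = w * (I * ((1 + I * w) / (1 - I * w) + 1))
  field_simp
  ring_nf

lemma cayley_right_inv : ∀ z ∈ Hset, Cmap (Cinv z) = z := by
  intro z hz
  have hz' : 0 < z.re := hz
  have h1 : z + 1 ≠ 0 := by
    intro h; have : (z+1).re = 0 := by rw [h]; simp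
    simp at this; linarith
  show (1 + I * ((z - 1) / (I * (z + 1)))) / (1 - I * ((z - 1) / (I * (z + 1)))) = z
  have key : I * ((z - 1) / (I * (z + 1))) = (z - 1) / (z + 1) := by
    rw [← mul_div_assoc, mul_div_mul_left _ _ I_ne_zero]
  rw [key]
  have h2 : 1 + (z - 1) / (z + 1) = 2 * z / (z + 1) := by field_simp; ring
  have h3 : 1 - (z - 1) / (z + 1) = 2 / (z + 1) := by field_simp; ring
  rw [h2, h3]
  rw [div_div_div_comm]
  rw [div_self h1, div_one, mul_comm, mul_div_assoc, div_self two_ne_zero, mul_one]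

lemma cayley_bijOn : Set.BijOn Cmap (ball (0:ℂ) 1) Hset :=
  Set.InvOn.bijOn ⟨cayley_left_inv, cayley_right_inv⟩ cayley_mapsTo cayley_inv_mapsTo

noncomputable def Pmap (α : ℝ) (z : ℂ) : ℂ := z ^ ((2 * α / Real.pi : ℝ) : ℂ)
noncomputable def Qmap (α : ℝ) (u : ℂ) : ℂ := u ^ ((Real.pi / (2 * α) : ℝ) : ℂ)
def Sset (α : ℝ) : Set ℂ := {u : ℂ | u ≠ 0 ∧ |Complex.arg u| < α}

lemma log_mul_ofReal_im (z : ℂ) (b : ℝ) : (Complex.log z * (b : ℂ)).im = b * arg z := by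
  simp [Complex.mul_im, Complex.log_im, mul_comm]

lemma arg_cpow_real {z : ℂ} (hz : z ≠ 0) {b : ℝ} (h1 : -Real.pi < b * arg z)
    (h2 : b * arg z ≤ Real.pi) : arg (z ^ (b : ℂ)) = b * arg z := by
  rw [cpow_def_of_ne_zero hz, ← Complex.log_im,
    Complex.log_exp (by rw [log_mul_ofReal_im]; exact h1)
      (by rw [log_mul_ofReal_im]; exact h2), log_mul_ofReal_im]

lemma mem_Sset_re_pos {α : ℝ} (hα' : α < Real.pi / 2) {u : ℂ} (hu : u ∈ Sset α) :
    0 < u.re := by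
  have h := hu.2
  have : |arg u| < Real.pi / 2 := lt_trans h hα'
  rcases Complex.abs_arg_lt_pi_div_two_iff.1 this with h' | h'
  · exact h'
  · exact absurd h' hu.1

section
variable {α : ℝ}

lemma P_abs_arg (hα : 0 < α) (hα' : α < Real.pi / 2) {z : ℂ} (hz : |arg z| < Real.pi / 2) :
    |2 * α / Real.pi * arg z| < α := by
  have hb : 0 < 2 * α / Real.pi := by positivity
  rw [abs_mul, abs_of_pos hb]
  calc 2 * α / Real.pi * |arg z| < 2 * α / Real.pi * (Real.pi / 2) :=
        mul_lt_mul_of_pos_left hz hb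
    _ = α := by field_simp [Real.pi_ne_zero]

lemma Q_abs_arg (hα : 0 < α) {u : ℂ} (hu : |arg u| < α) :
    |Real.pi / (2 * α) * arg u| < Real.pi / 2 := by
  have hb : 0 < Real.pi / (2 * α) := by positivity
  rw [abs_mul, abs_of_pos hb]
  calc Real.pi / (2 * α) * |arg u| < Real.pi / (2 * α) * α :=
        mul_lt_mul_of_pos_left hu hb
    _ = Real.pi / 2 := by field_simp [ne_of_gt hα]

lemma pow_mapsTo (hα : 0 < α) (hα' : α < Real.pi / 2) :
    Set.MapsTo (Pmap α) Hset (Sset α) := by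
  intro z hz
  have hz' : 0 < z.re := hz
  have hzne : z ≠ 0 := fun h => by simp [h] at hz'
  have harg : |arg z| < Real.pi / 2 := Complex.abs_arg_lt_pi_div_two_iff.2 (Or.inl hz')
  have hkey := P_abs_arg hα hα' harg
  obtain ⟨hk1, hk2⟩ := abs_lt.1 hkey
  constructor
  · simp only [Pmap, Ne, cpow_eq_zero_iff, not_and_or]
    exact Or.inl hzne
  · have : arg (Pmap α z) = 2 * α / Real.pi * arg z := by
      apply arg_cpow_real hzne
      · linarith [Real.pi_pos]
      · linarith [Real.pi_pos]
    rw [this]; exact hkey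

lemma qow_mapsTo (hα : 0 < α) (hα' : α < Real.pi / 2) :
    Set.MapsTo (Qmap α) (Sset α) Hset := by
  intro u hu
  have hune := hu.1
  have hkey := Q_abs_arg hα hu.2
  obtain ⟨hk1, hk2⟩ := abs_lt.1 hkey
  have harg : arg (Qmap α u) = Real.pi / (2 * α) * arg u := by
    apply arg_cpow_real hune
    · linarith [Real.pi_pos]
    · linarith [Real.pi_pos]
  have hne : Qmap α u ≠ 0 := by
    simp only [Qmap, Ne, cpow_eq_zero_iff, not_and_or]
    exact Or.inl hune
  show 0 < (Qmap α u).re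
  rcases Complex.abs_arg_lt_pi_div_two_iff.1 (by rw [harg]; exact hkey) with h | h
  · exact h
  · exact absurd h hne

lemma pow_left_inv (hα : 0 < α) (hα' : α < Real.pi / 2) :
    ∀ z ∈ Hset, Qmap α (Pmap α z) = z := by
  intro z hz
  have hz' : 0 < z.re := hz
  have hzne : z ≠ 0 := fun h => by simp [h] at hz'
  have harg : |arg z| < Real.pi / 2 := Complex.abs_arg_lt_pi_div_two_iff.2 (Or.inl hz')
  obtain ⟨hk1, hk2⟩ := abs_lt.1 (P_abs_arg hα hα' harg)
  show Pmap α z ^ ((Real.pi / (2 * α) : ℝ) : ℂ) = z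
  rw [Pmap, ← Complex.cpow_mul]
  · have : ((2 * α / Real.pi : ℝ) : ℂ) * ((Real.pi / (2 * α) : ℝ) : ℂ) = 1 := by
      rw [← Complex.ofReal_mul, show (2 * α / Real.pi) * (Real.pi / (2 * α)) = 1 by
        field_simp [ne_of_gt hα, Real.pi_ne_zero]]
      simp
    rw [this, cpow_one]
  · rw [log_mul_ofReal_im]; linarith [Real.pi_pos]
  · rw [log_mul_ofReal_im]; linarith [Real.pi_pos]

lemma pow_right_inv (hα : 0 < α) : ∀ u ∈ Sset α, Pmap α (Qmap α u) = u := by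
  intro u hu
  have hune := hu.1
  obtain ⟨hk1, hk2⟩ := abs_lt.1 (Q_abs_arg hα hu.2)
  show Qmap α u ^ ((2 * α / Real.pi : ℝ) : ℂ) = u
  rw [Qmap, ← Complex.cpow_mul]
  · have : ((Real.pi / (2 * α) : ℝ) : ℂ) * ((2 * α / Real.pi : ℝ) : ℂ) = 1 := by
      rw [← Complex.ofReal_mul, show (Real.pi / (2 * α)) * (2 * α / Real.pi) = 1 by
        field_simp [ne_of_gt hα, Real.pi_ne_zero]]
      simp
    rw [this, cpow_one]
  · rw [log_mul_ofReal_im]; linarith [Real.pi_pos]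
  · rw [log_mul_ofReal_im]; linarith [Real.pi_pos]

lemma pow_bijOn (hα : 0 < α) (hα' : α < Real.pi / 2) :
    Set.BijOn (Pmap α) Hset (Sset α) :=
  Set.InvOn.bijOn ⟨pow_left_inv hα hα', pow_right_inv hα⟩ (pow_mapsTo hα hα')
    (qow_mapsTo hα hα')

end

noncomputable def Mmap (α : ℝ) (u : ℂ) : ℂ := I * (Real.tan α : ℂ) * (1 - u) / (1 + u)
noncomputable def Minv (α : ℝ) (s : ℂ) : ℂ :=
  (I * (Real.tan α : ℂ) - s) / (I * (Real.tan α : ℂ) + s)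

section
variable {α : ℝ}

lemma ca_pos (hα : 0 < α) (hα' : α < Real.pi / 2) : 0 < Real.cos α :=
  Real.cos_pos_of_mem_Ioo ⟨by linarith [Real.pi_pos], hα'⟩

lemma sa_pos (hα : 0 < α) (hα' : α < Real.pi / 2) : 0 < Real.sin α :=
  Real.sin_pos_of_pos_of_lt_pi hα (by linarith [Real.pi_pos])

lemma ta_pos (hα : 0 < α) (hα' : α < Real.pi / 2) : 0 < Real.tan α := by
  rw [Real.tan_eq_sin_div_cos]; exact div_pos (sa_pos hα hα') (ca_pos hα hα')

/-- The sector as two linear inequalities. -/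
lemma sset_iff_cond (hα : 0 < α) (hα' : α < Real.pi / 2) (u : ℂ) :
    u ∈ Sset α ↔
      (0 < Real.sin α * u.re + Real.cos α * u.im ∧
       0 < Real.sin α * u.re - Real.cos α * u.im) := by
  have hca := ca_pos hα hα'
  have hsa := sa_pos hα hα'
  constructor
  · intro hu
    have hx : 0 < u.re := mem_Sset_re_pos hα' hu
    have ht := Complex.tan_arg u
    have hmem1 : arg u ∈ Set.Ioo (-(Real.pi/2)) (Real.pi/2) := by
      have := lt_trans hu.2 hα'
      obtain ⟨a, b⟩ := abs_lt.1 this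
      exact ⟨by linarith, b⟩
    have hmem2 : α ∈ Set.Ioo (-(Real.pi/2)) (Real.pi/2) := ⟨by linarith, hα'⟩
    have hmem3 : -α ∈ Set.Ioo (-(Real.pi/2)) (Real.pi/2) := ⟨by linarith, by linarith⟩
    obtain ⟨ha1, ha2⟩ := abs_lt.1 hu.2
    have t1 : u.im / u.re < Real.tan α := by
      rw [← ht]; exact Real.strictMonoOn_tan hmem1 hmem2 ha2
    have t2 : Real.tan (-α) < u.im / u.re := by
      rw [← ht]; exact Real.strictMonoOn_tan hmem3 hmem1 ha1
    rw [Real.tan_eq_sin_div_cos] at t1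
    rw [Real.tan_neg, Real.tan_eq_sin_div_cos] at t2
    rw [div_lt_div_iff₀ hx hca] at t1
    rw [show -(Real.sin α / Real.cos α) = -Real.sin α / Real.cos α by ring,
      div_lt_div_iff₀ hca hx] at t2
    constructor <;> nlinarith
  · rintro ⟨h1, h2⟩
    have hx : 0 < u.re := by nlinarith
    have hune : u ≠ 0 := fun h => by simp [h] at hx
    have hmem1 : arg u ∈ Set.Ioo (-(Real.pi/2)) (Real.pi/2) := by
      obtain ⟨a, b⟩ := abs_lt.1 (Complex.abs_arg_lt_pi_div_two_iff.2 (Or.inl hx))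
      exact ⟨by linarith, b⟩
    have hmem2 : α ∈ Set.Ioo (-(Real.pi/2)) (Real.pi/2) := ⟨by linarith, hα'⟩
    have hmem3 : -α ∈ Set.Ioo (-(Real.pi/2)) (Real.pi/2) := ⟨by linarith, by linarith⟩
    have ht := Complex.tan_arg u
    refine ⟨hune, abs_lt.2 ⟨?_, ?_⟩⟩
    · rw [← (Real.strictMonoOn_tan.lt_iff_lt hmem3 hmem1), Real.tan_neg, ht,
        Real.tan_eq_sin_div_cos,
        show -(Real.sin α / Real.cos α) = -Real.sin α / Real.cos α by ring,
        div_lt_div_iff₀ hca hx]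
      nlinarith
    · rw [← (Real.strictMonoOn_tan.lt_iff_lt hmem1 hmem2), ht,
        Real.tan_eq_sin_div_cos, div_lt_div_iff₀ hx hca]
      nlinarith

lemma mobius_frac1 (c t u : ℂ) (hc : c ≠ 0) (hu : 1 + u ≠ 0) :
    1 - I * (t / c) * (1 - u) / (1 + u) = ((c - I * t) + u * (c + I * t)) / (c * (1 + u)) := by
  field_simp
  ring

lemma mobius_frac2 (c t u : ℂ) (hc : c ≠ 0) (hu : 1 + u ≠ 0) :
    1 + I * (t / c) * (1 - u) / (1 + u) = ((c + I * t) + u * (c - I * t)) / (c * (1 + u)) := by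
  field_simp
  ring

lemma tan_cast (α : ℝ) : (Real.tan α : ℂ) = (Real.sin α : ℂ) / (Real.cos α : ℂ) := by
  rw [Real.tan_eq_sin_div_cos, Complex.ofReal_div]

/-- Membership of `Mmap α u` in the lens, characterized by two linear conditions. -/
lemma mobius_mem_lens_iff (hα : 0 < α) (hα' : α < Real.pi / 2) (u : ℂ)
    (hu : (1 : ℂ) + u ≠ 0) :
    Mmap α u ∈ lens (1 / Real.cos α) ↔
      (0 < Real.sin α * u.re + Real.cos α * u.im ∧
       0 < Real.sin α * u.re - Real.cos α * u.im) := by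
  have hca := ca_pos hα hα'
  have hsa := sa_pos hα hα'
  have hcane : (Real.cos α : ℂ) ≠ 0 := Complex.ofReal_ne_zero.2 (ne_of_gt hca)
  set ca := Real.cos α
  set sa := Real.sin α
  have e1 : 1 - Mmap α u =
      (((ca : ℂ) - I * sa) + u * ((ca : ℂ) + I * sa)) / ((ca : ℂ) * (1 + u)) := by
    unfold Mmap
    rw [tan_cast]
    exact mobius_frac1 _ _ _ hcane hu
  have e2 : 1 + Mmap α u =
      (((ca : ℂ) + I * sa) + u * ((ca : ℂ) - I * sa)) / ((ca : ℂ) * (1 + u)) := by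
    unfold Mmap
    rw [tan_cast]
    exact mobius_frac2 _ _ _ hcane hu
  have hnu : 0 < ‖(1 : ℂ) + u‖ := norm_pos_iff.2 hu
  have hden : ‖(ca : ℂ) * (1 + u)‖ = ca * ‖(1 : ℂ) + u‖ := by
    rw [norm_mul, Complex.norm_real, Real.norm_eq_abs, abs_of_pos hca]
  have key : ∀ N : ℂ, (‖N / ((ca : ℂ) * (1 + u))‖ < 1 / ca ↔ normSq N < normSq (1 + u)) := by
    intro N
    rw [norm_div, hden, div_lt_div_iff₀ (by positivity) hca, one_mul, mul_comm ca,
      mul_lt_mul_iff_of_pos_right hca, norm_lt_norm_iff]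
  rw [show Mmap α u ∈ lens (1/ca) ↔
      (‖1 - Mmap α u‖ < 1/ca ∧ ‖1 + Mmap α u‖ < 1/ca) from Iff.rfl, e1, e2, key, key]
  have pyth : sa ^ 2 + ca ^ 2 = 1 := Real.sin_sq_add_cos_sq α
  simp only [normSq_apply, Complex.add_re, Complex.add_im, Complex.sub_re, Complex.sub_im,
    Complex.mul_re, Complex.mul_im, Complex.ofReal_re, Complex.ofReal_im, Complex.I_re,
    Complex.I_im, Complex.one_re, Complex.one_im]
  constructor
  · rintro ⟨h1, h2⟩
    constructor <;> nlinarith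
  · rintro ⟨h1, h2⟩
    constructor <;> nlinarith


lemma one_add_ne_of_re_pos {u : ℂ} (hx : 0 < u.re) : (1 : ℂ) + u ≠ 0 := by
  intro h
  have : ((1 : ℂ) + u).re = 0 := by rw [h]; simp
  simp at this
  linarith

lemma mobius_mapsTo (hα : 0 < α) (hα' : α < Real.pi / 2) :
    Set.MapsTo (Mmap α) (Sset α) (lens (1 / Real.cos α)) := by
  intro u hu
  have hx := mem_Sset_re_pos hα' hu
  exact (mobius_mem_lens_iff hα hα' u (one_add_ne_of_re_pos hx)).2
    ((sset_iff_cond hα hα' u).1 hu)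

lemma lens_denom_ne (hα : 0 < α) (hα' : α < Real.pi / 2) {s : ℂ}
    (hs : s ∈ lens (1 / Real.cos α)) : I * (Real.tan α : ℂ) + s ≠ 0 := by
  intro h
  have hca := ca_pos hα hα'
  have hsa := sa_pos hα hα'
  have hseq : s = -(I * (Real.tan α : ℂ)) := by linear_combination h
  have h2 : ‖(1 : ℂ) + s‖ < 1 / Real.cos α := hs.2
  have hnormsq : normSq ((1 : ℂ) + s) = 1 + Real.tan α ^ 2 := by
    rw [hseq]
    simp only [normSq_apply, Complex.add_re, Complex.add_im, Complex.neg_re, Complex.neg_im,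
      Complex.mul_re, Complex.mul_im, Complex.I_re, Complex.I_im, Complex.ofReal_re,
      Complex.ofReal_im, Complex.one_re, Complex.one_im]
    ring
  have htan : 1 + Real.tan α ^ 2 = (1 / Real.cos α) ^ 2 := by
    rw [Real.tan_eq_sin_div_cos]
    have pyth : Real.sin α ^ 2 + Real.cos α ^ 2 = 1 := Real.sin_sq_add_cos_sq α
    field_simp
    linarith
  have hn2 : ‖(1 : ℂ) + s‖ ^ 2 = (1 / Real.cos α) ^ 2 := by
    rw [Complex.sq_norm, hnormsq, htan]
  nlinarith [norm_nonneg ((1 : ℂ) + s), one_div_pos.2 hca]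

lemma frac_add (c s : ℂ) (hd : c + s ≠ 0) : (1 : ℂ) + (c - s) / (c + s) = 2 * c / (c + s) := by
  field_simp
  ring

lemma frac_sub (c s : ℂ) (hd : c + s ≠ 0) : (1 : ℂ) - (c - s) / (c + s) = 2 * s / (c + s) := by
  field_simp
  ring

lemma frac_add' (c u : ℂ) (hu : (1 : ℂ) + u ≠ 0) :
    c + c * (1 - u) / (1 + u) = 2 * c / (1 + u) := by
  field_simp
  ring

lemma frac_sub' (c u : ℂ) (hu : (1 : ℂ) + u ≠ 0) :
    c - c * (1 - u) / (1 + u) = 2 * c * u / (1 + u) := by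
  field_simp
  ring

lemma cancel1 (c s d : ℂ) (hc : c ≠ 0) (hd : d ≠ 0) : c * (2 * s / d) / (2 * c / d) = s := by
  field_simp

lemma cancel2 (c u d : ℂ) (hc : c ≠ 0) (hd : d ≠ 0) : 2 * c * u / d / (2 * c / d) = u := by
  rw [div_div_div_comm, div_self hd, div_one, mul_comm (2 * c) u, mul_div_assoc,
    div_self (mul_ne_zero two_ne_zero hc), mul_one]

lemma It_ne (hα : 0 < α) (hα' : α < Real.pi / 2) : I * (Real.tan α : ℂ) ≠ 0 :=
  mul_ne_zero I_ne_zero (Complex.ofReal_ne_zero.2 (ne_of_gt (ta_pos hα hα')))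

lemma minv_add_one (hα : 0 < α) (hα' : α < Real.pi / 2) {s : ℂ}
    (hd : I * (Real.tan α : ℂ) + s ≠ 0) :
    (1 : ℂ) + Minv α s = 2 * (I * (Real.tan α : ℂ)) / (I * (Real.tan α : ℂ) + s) :=
  frac_add _ _ hd

lemma minv_sub_one (hα : 0 < α) (hα' : α < Real.pi / 2) {s : ℂ}
    (hd : I * (Real.tan α : ℂ) + s ≠ 0) :
    (1 : ℂ) - Minv α s = 2 * s / (I * (Real.tan α : ℂ) + s) :=
  frac_sub _ _ hd

lemma mobius_right_inv (hα : 0 < α) (hα' : α < Real.pi / 2) :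
    ∀ s ∈ lens (1 / Real.cos α), Mmap α (Minv α s) = s := by
  intro s hs
  have hd := lens_denom_ne hα hα' hs
  have hIt := It_ne hα hα'
  show I * (Real.tan α : ℂ) * (1 - Minv α s) / (1 + Minv α s) = s
  rw [minv_sub_one hα hα' hd, minv_add_one hα hα' hd]
  exact cancel1 _ _ _ hIt hd

lemma mobius_inv_mapsTo (hα : 0 < α) (hα' : α < Real.pi / 2) :
    Set.MapsTo (Minv α) (lens (1 / Real.cos α)) (Sset α) := by
  intro s hs
  have hd := lens_denom_ne hα hα' hs
  have hIt := It_ne hα hα'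
  have h1 : (1 : ℂ) + Minv α s ≠ 0 := by
    rw [minv_add_one hα hα' hd]
    exact div_ne_zero (mul_ne_zero two_ne_zero hIt) hd
  have hmem : Mmap α (Minv α s) ∈ lens (1 / Real.cos α) := by
    rw [mobius_right_inv hα hα' s hs]; exact hs
  exact (sset_iff_cond hα hα' _).2 ((mobius_mem_lens_iff hα hα' _ h1).1 hmem)

lemma mobius_left_inv (hα : 0 < α) (hα' : α < Real.pi / 2) :
    ∀ u ∈ Sset α, Minv α (Mmap α u) = u := by
  intro u hu
  have hx := mem_Sset_re_pos hα' hu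
  have h1u : (1 : ℂ) + u ≠ 0 := one_add_ne_of_re_pos hx
  have hIt := It_ne hα hα'
  have hd : I * (Real.tan α : ℂ) + Mmap α u = 2 * (I * (Real.tan α : ℂ)) / (1 + u) := by
    show I * (Real.tan α : ℂ) + I * (Real.tan α : ℂ) * (1 - u) / (1 + u) = _
    exact frac_add' _ _ h1u
  have hn : I * (Real.tan α : ℂ) - Mmap α u = 2 * (I * (Real.tan α : ℂ)) * u / (1 + u) := by
    show I * (Real.tan α : ℂ) - I * (Real.tan α : ℂ) * (1 - u) / (1 + u) = _
    exact frac_sub' _ _ h1u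
  show (I * (Real.tan α : ℂ) - Mmap α u) / (I * (Real.tan α : ℂ) + Mmap α u) = u
  rw [hn, hd]
  exact cancel2 _ _ _ hIt h1u

lemma mobius_bijOn (hα : 0 < α) (hα' : α < Real.pi / 2) :
    Set.BijOn (Mmap α) (Sset α) (lens (1 / Real.cos α)) :=
  Set.InvOn.bijOn ⟨mobius_left_inv hα hα', mobius_right_inv hα hα'⟩
    (mobius_mapsTo hα hα') (mobius_inv_mapsTo hα hα')

lemma fmap_eq (α : ℝ) : Fmap α = Mmap α ∘ Pmap α ∘ Cmap := rfl

lemma fmap_diff (hα : 0 < α) (hα' : α < Real.pi / 2) :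
    DifferentiableOn ℂ (Fmap α) (ball (0 : ℂ) 1) := by
  intro w hw
  apply DifferentiableAt.differentiableWithinAt
  have hd := cayley_denom_ne w hw
  have hz : Cmap w ∈ Hset := cayley_mapsTo hw
  have hzslit : Cmap w ∈ slitPlane := Or.inl hz
  have hu : Pmap α (Cmap w) ∈ Sset α := pow_mapsTo hα hα' hz
  have hune : (1 : ℂ) + Pmap α (Cmap w) ≠ 0 :=
    one_add_ne_of_re_pos (mem_Sset_re_pos hα' hu)
  have hC : DifferentiableAt ℂ Cmap w := by
    unfold Cmap
    exact ((differentiableAt_const _).add ((differentiableAt_const _).mul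
      differentiableAt_id)).div ((differentiableAt_const _).sub
      ((differentiableAt_const _).mul differentiableAt_id)) hd
  have hPC : DifferentiableAt ℂ (fun w => Pmap α (Cmap w)) w := by
    unfold Pmap
    exact hC.cpow (differentiableAt_const _) hzslit
  have : DifferentiableAt ℂ
      (fun w => I * (Real.tan α : ℂ) * (1 - Pmap α (Cmap w)) / (1 + Pmap α (Cmap w))) w := by
    exact ((differentiableAt_const _).mul ((differentiableAt_const _).sub hPC)).div
      ((differentiableAt_const _).add hPC) hune
  exact this

end

theorem Fmap_holomorphic_bijection (α : ℝ) (hα : 0 < α) (hα' : α < Real.pi / 2) :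
    DifferentiableOn ℂ (Fmap α) (ball (0 : ℂ) 1) ∧
    Set.BijOn (Fmap α) (ball (0 : ℂ) 1) (lens (1 / Real.cos α)) := by
  refine ⟨fmap_diff hα hα', ?_⟩
  rw [fmap_eq]
  exact ((mobius_bijOn hα hα').comp (pow_bijOn hα hα')).comp (cayley_bijOn)
end

section
/- For 0 < α < π/2 and γ = 1/cos(α), the conformal map F_γ of the unit disc onto Ω_γ satisfies F_γ(0) = 0 and F_γ'(0) = 2α·tan(α)/π. -/
open Complex Metric

theorem Fmap_zero_and_deriv (α : ℝ) (hα : 0 < α) (hα' : α < Real.pi / 2) :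
    Fmap α 0 = 0 ∧ deriv (Fmap α) 0 = ((2 * α * Real.tan α / Real.pi : ℝ) : ℂ) := by
  have hπ : (Real.pi : ℂ) ≠ 0 := by
    exact_mod_cast Real.pi_ne_zero
  set c : ℂ := ((2 * α / Real.pi : ℝ) : ℂ) with hc
  set t : ℂ := (Real.tan α : ℂ) with ht
  -- the Möbius part
  have hV : HasDerivAt (fun w : ℂ => (1 + I * w) / (1 - I * w)) (2 * I) 0 := by
    have h1 : HasDerivAt (fun w : ℂ => 1 + I * w) I 0 := by
      simpa using ((hasDerivAt_id (0 : ℂ)).const_mul I).const_add 1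
    have h2 : HasDerivAt (fun w : ℂ => 1 - I * w) (-I) 0 := by
      simpa using ((hasDerivAt_id (0 : ℂ)).const_mul I).const_sub 1
    have := h1.div h2 (by norm_num)
    exact this.congr_deriv (by norm_num; ring)
  have hV0 : ((1 + I * (0:ℂ)) / (1 - I * (0:ℂ))) = 1 := by norm_num
  -- the power
  have hu : HasDerivAt (fun w : ℂ => ((1 + I * w) / (1 - I * w)) ^ c)
      (2 * I * c) 0 := by
    have := hV.cpow_const (c := c) (by rw [hV0]; left; norm_num)
    rw [hV0] at this
    simpa using this.congr_deriv (by rw [Complex.one_cpow]; ring)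
  -- numerator and denominator
  have hnum : HasDerivAt (fun w : ℂ => I * t *
      (1 - ((1 + I * w) / (1 - I * w)) ^ c)) (I * t * (-(2 * I * c))) 0 := by
    exact ((hu.const_sub 1)).const_mul (I * t)
  have hden : HasDerivAt (fun w : ℂ => 1 +
      ((1 + I * w) / (1 - I * w)) ^ c) (2 * I * c) 0 := hu.const_add 1
  have hden0 : (1 + ((1 + I * (0:ℂ)) / (1 - I * (0:ℂ))) ^ c) = 2 := by
    rw [hV0, Complex.one_cpow]; norm_num
  have hF : HasDerivAt (Fmap α) (t * c) 0 := by
    have := hnum.div hden (by rw [hden0]; norm_num)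
    refine this.congr_deriv ?_
    rw [hV0, Complex.one_cpow]
    have hI : I * I = -1 := Complex.I_mul_I
    linear_combination (-t * c) * hI
  rw [hF.deriv]
  refine ⟨?_, ?_⟩
  · simp [Fmap, hV0, Complex.one_cpow]
  · rw [hc, ht]
    push_cast
    field_simp
end

section
/- Let X = {G ∈ H^∞ : G(0) = 0, G'(0) = 1/2}, where H^∞ is the set of bounded holomorphic functions on the unit disc. If G ∈ X and G(𝔻) ⊆ Ω_γ for some γ with 1 < γ, then γ ≥ √2. Moreover γ = √2 is achievable, attained by G = F_{√2}, the conformal map of 𝔻 onto Ω_{√2} with F_{√2}(0) = 0 and F_{√2}'(0) = 1/2. -/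
open Complex Metric

set_option maxHeartbeats 1000000

lemma norm_one_sub_lt_norm_one_add {q : ℂ} (h : 0 < q.re) : ‖1 - q‖ < ‖1 + q‖ := by
  rw [Complex.norm_def, Complex.norm_def]
  apply Real.sqrt_lt_sqrt (Complex.normSq_nonneg _)
  simp [Complex.normSq_apply]
  nlinarith [sq_nonneg q.im]

lemma cpow_real_re_im {r : ℂ} (hr : r ≠ 0) (c : ℝ) :
    (r ^ (c : ℂ)).re = Real.exp (c * (Complex.log r).re) * Real.cos (c * r.arg) ∧
    (r ^ (c : ℂ)).im = Real.exp (c * (Complex.log r).re) * Real.sin (c * r.arg) := by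
  rw [Complex.cpow_def_of_ne_zero hr]
  rw [Complex.exp_re, Complex.exp_im]
  constructor <;> · simp [Complex.mul_re, Complex.mul_im, Complex.log_im]; ring_nf

lemma sin_abs_lt_cos {θ : ℝ} (h : |θ| < Real.pi / 4) : |Real.sin θ| < Real.cos θ := by
  obtain ⟨h1, h2⟩ := abs_lt.mp h
  have hpi := Real.pi_pos
  have c1 : 0 < Real.cos (θ + Real.pi / 4) :=
    Real.cos_pos_of_mem_Ioo ⟨by linarith, by linarith⟩
  have c2 : 0 < Real.cos (θ - Real.pi / 4) :=
    Real.cos_pos_of_mem_Ioo ⟨by linarith, by linarith⟩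
  rw [Real.cos_add, Real.cos_pi_div_four, Real.sin_pi_div_four] at c1
  rw [Real.cos_sub, Real.cos_pi_div_four, Real.sin_pi_div_four] at c2
  have hs : 0 < Real.sqrt 2 := by positivity
  rw [abs_lt]
  constructor <;> nlinarith

lemma add_one_ne_zero_of_re_pos {q : ℂ} (h : 0 < q.re) : 1 + q ≠ 0 := by
  intro hq
  have : (1 + q).re = 0 := by rw [hq]; simp
  simp [Complex.add_re] at this
  linarith

lemma lens_core {q : ℂ} (h : |q.im| < q.re) :
    ‖1 - I * (1 - q) / (1 + q)‖ < Real.sqrt 2 ∧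
    ‖1 + I * (1 - q) / (1 + q)‖ < Real.sqrt 2 := by
  obtain ⟨hi1, hi2⟩ := abs_lt.mp h
  have hre : 0 < q.re := lt_of_le_of_lt (abs_nonneg _) h
  have hne : (1 : ℂ) + q ≠ 0 := add_one_ne_zero_of_re_pos hre
  have e1 : 1 - I * (1 - q) / (1 + q) = ((1 + q) - I * (1 - q)) / (1 + q) := by
    field_simp
  have e2 : 1 + I * (1 - q) / (1 + q) = ((1 + q) + I * (1 - q)) / (1 + q) := by
    field_simp
  have key : ∀ z : ℂ, Complex.normSq z < 2 * Complex.normSq (1 + q) →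
      ‖z / (1 + q)‖ < Real.sqrt 2 := by
    intro z hz
    rw [norm_div, Complex.norm_def,
      Complex.norm_def, div_lt_iff₀ (Real.sqrt_pos.mpr (Complex.normSq_pos.mpr hne)),
      ← Real.sqrt_mul (by norm_num : (0:ℝ) ≤ 2)]
    exact Real.sqrt_lt_sqrt (Complex.normSq_nonneg _) hz
  constructor
  · rw [e1]
    apply key
    simp only [Complex.normSq_apply, Complex.sub_re, Complex.sub_im, Complex.add_re,
      Complex.add_im, Complex.one_re, Complex.one_im, Complex.mul_re, Complex.mul_im,
      Complex.I_re, Complex.I_im]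
    nlinarith
  · rw [e2]
    apply key
    simp only [Complex.normSq_apply, Complex.sub_re, Complex.sub_im, Complex.add_re,
      Complex.add_im, Complex.one_re, Complex.one_im, Complex.mul_re, Complex.mul_im,
      Complex.I_re, Complex.I_im]
    nlinarith

lemma abs_arctan (x : ℝ) : |Real.arctan x| = Real.arctan |x| := by
  rcases le_or_gt 0 x with h | h
  · rw [_root_.abs_of_nonneg h, _root_.abs_of_nonneg (by
      rw [← Real.arctan_zero]; exact Real.arctan_strictMono.monotone h)]
  · have hx : Real.arctan x < 0 := by
      rw [← Real.arctan_zero]; exact Real.arctan_strictMono h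
    rw [_root_.abs_of_neg h, _root_.abs_of_neg hx, Real.arctan_neg]

lemma Fmap_eq : Fmap (Real.pi / 4) = fun w =>
    I * (1 - ((1 + I * w) / (1 - I * w)) ^ (((1:ℝ)/2 : ℝ) : ℂ)) /
      (1 + ((1 + I * w) / (1 - I * w)) ^ (((1:ℝ)/2 : ℝ) : ℂ)) := by
  have hexp : (2 * (Real.pi / 4) / Real.pi : ℝ) = 1/2 := by
    field_simp
    ring
  funext w
  rw [Fmap, Real.tan_pi_div_four, hexp]
  push_cast
  ring

lemma r_facts {w : ℂ} (hw : ‖w‖ < 1) :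
    (1 : ℂ) - I * w ≠ 0 ∧ 0 < ((1 + I * w) / (1 - I * w)).re := by
  have hnz : (1 : ℂ) - I * w ≠ 0 := by
    intro hz
    have h1 : ‖(1 : ℂ)‖ = ‖I * w‖ := by
      rw [sub_eq_zero] at hz; rw [hz]
    simp [norm_mul] at h1
    rw [h1] at hw; exact lt_irrefl _ hw
  refine ⟨hnz, ?_⟩
  rw [Complex.div_re]
  have hD : 0 < Complex.normSq (1 - I * w) := Complex.normSq_pos.mpr hnz
  have hs : w.re^2 + w.im^2 < 1 := by
    have := Complex.normSq_apply w
    have h2 : Complex.normSq w < 1 := by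
      rw [← Complex.sq_norm]
      nlinarith [norm_nonneg w]
    rw [Complex.normSq_apply] at h2
    nlinarith
  have e1 : (1 + I * w).re = 1 - w.im := by simp; ring
  have e2 : (1 + I * w).im = w.re := by simp
  have e3 : (1 - I * w).re = 1 + w.im := by simp
  have e4 : (1 - I * w).im = -w.re := by simp
  rw [e1, e2, e3, e4]
  rw [← add_div, div_pos_iff]
  left
  constructor
  · nlinarith
  · exact hD

lemma q_facts {w : ℂ} (hw : ‖w‖ < 1) :
    |(((1 + I * w) / (1 - I * w)) ^ (((1:ℝ)/2 : ℝ) : ℂ)).im| <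
      (((1 + I * w) / (1 - I * w)) ^ (((1:ℝ)/2 : ℝ) : ℂ)).re := by
  obtain ⟨hnz, hre⟩ := r_facts hw
  set r := (1 + I * w) / (1 - I * w) with hr
  have hr0 : r ≠ 0 := by
    intro h; rw [h] at hre; simp at hre
  have harg : |r.arg| < Real.pi / 2 := Complex.abs_arg_lt_pi_div_two_iff.mpr (Or.inl hre)
  have harg2 : |(1/2 : ℝ) * r.arg| < Real.pi / 4 := by
    rw [abs_mul]
    rw [_root_.abs_of_pos (by norm_num : (0:ℝ) < 1/2)]
    linarith [abs_nonneg r.arg]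
  obtain ⟨hre', him'⟩ := cpow_real_re_im hr0 (1/2)
  rw [hre', him', abs_mul, _root_.abs_of_pos (Real.exp_pos _)]
  have := sin_abs_lt_cos harg2
  have hE := Real.exp_pos ((1/2 : ℝ) * (Complex.log r).re)
  nlinarith [this, hE]

theorem sqrt_two_optimal (γ : ℝ) (hγ : 1 < γ) (G : ℂ → ℂ)
    (hd : DifferentiableOn ℂ G (ball (0 : ℂ) 1))
    (hbdd : ∃ C : ℝ, ∀ w ∈ ball (0 : ℂ) 1, ‖G w‖ ≤ C)
    (h0 : G 0 = 0) (h1 : deriv G 0 = 1 / 2)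
    (hmem : ∀ w ∈ ball (0 : ℂ) 1, G w ∈ lens γ) :
    Real.sqrt 2 ≤ γ ∧
    (Fmap (Real.pi / 4) 0 = 0 ∧ deriv (Fmap (Real.pi / 4)) 0 = 1 / 2 ∧
      DifferentiableOn ℂ (Fmap (Real.pi / 4)) (ball (0 : ℂ) 1) ∧
      (∃ C : ℝ, ∀ w ∈ ball (0 : ℂ) 1, ‖Fmap (Real.pi / 4) w‖ ≤ C) ∧
      ∀ w ∈ ball (0 : ℂ) 1, Fmap (Real.pi / 4) w ∈ lens (Real.sqrt 2)) := by
  constructor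
  · -- ============ Part 1: the lower bound √2 ≤ γ ============
    by_contra hcon
    push_neg at hcon
    have hγ0 : 0 < γ := by linarith
    set b : ℝ := Real.sqrt (γ^2 - 1) with hbdef
    have hb2 : b^2 = γ^2 - 1 := Real.sq_sqrt (by nlinarith)
    have hb : 0 < b := Real.sqrt_pos.mpr (by nlinarith)
    have hb1 : b < 1 := by
      have h2 : γ^2 < 2 := by
        have := Real.sq_sqrt (by norm_num : (2:ℝ) ≥ 0)
        nlinarith [Real.sqrt_nonneg 2]
      nlinarith
    set α : ℝ := Real.arctan b with hadef
    have hα : 0 < α := by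
      rw [hadef, ← Real.arctan_zero]
      exact Real.arctan_strictMono hb
    have hα4 : α < Real.pi / 4 := by
      rw [hadef, ← Real.arctan_one]
      exact Real.arctan_strictMono hb1
    set c : ℝ := Real.pi / (2 * α) with hcdef
    have hπ := Real.pi_pos
    have hc : 0 < c := by positivity
    have hcα : c * α = Real.pi / 2 := by
      rw [hcdef]; field_simp
    set m : ℂ → ℂ := fun s => ((b:ℝ) + I * s) / ((b:ℝ) - I * s) with hmdef
    have key : ∀ s ∈ lens γ, ((b:ℂ) - I * s ≠ 0) ∧ 0 < (m s).re ∧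
        |(m s).im| < b * (m s).re := by
      intro s hs
      obtain ⟨hs1, hs2⟩ := hs
      have e1 : (1 - s.re)^2 + s.im^2 < γ^2 := by
        have : ‖1 - s‖^2 < γ^2 := by nlinarith [norm_nonneg (1 - s)]
        rw [Complex.sq_norm, Complex.normSq_apply] at this
        simp only [Complex.sub_re, Complex.sub_im, Complex.one_re, Complex.one_im] at this
        nlinarith
      have e2 : (1 + s.re)^2 + s.im^2 < γ^2 := by
        have : ‖1 + s‖^2 < γ^2 := by nlinarith [norm_nonneg (1 + s)]
        rw [Complex.sq_norm, Complex.normSq_apply] at this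
        simp only [Complex.add_re, Complex.add_im, Complex.one_re, Complex.one_im] at this
        nlinarith
      have hA1 : -2 * s.re < b^2 - s.re^2 - s.im^2 := by nlinarith
      have hA2 : 2 * s.re < b^2 - s.re^2 - s.im^2 := by nlinarith
      have hnz : ((b:ℂ) - I * s) ≠ 0 := by
        intro hz
        rw [Complex.ext_iff] at hz
        simp only [Complex.sub_re, Complex.sub_im, Complex.ofReal_re, Complex.ofReal_im,
          Complex.mul_re, Complex.mul_im, Complex.I_re, Complex.I_im, Complex.zero_re,
          Complex.zero_im] at hz
        obtain ⟨hz1, hz2⟩ := hz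
        have : s.im = -b := by linarith [hz1]
        have h2 : s.re = 0 := by linarith [hz2]
        rw [this, h2] at hA1
        nlinarith
      have hD : 0 < Complex.normSq ((b:ℂ) - I * s) := Complex.normSq_pos.mpr hnz
      have ez1 : ((b:ℂ) + I * s).re = b - s.im := by simp; ring
      have ez2 : ((b:ℂ) + I * s).im = s.re := by simp
      have ez3 : ((b:ℂ) - I * s).re = b + s.im := by simp
      have ez4 : ((b:ℂ) - I * s).im = -s.re := by simp
      have hmre : (m s).re = (b^2 - s.re^2 - s.im^2) / Complex.normSq ((b:ℂ) - I * s) := by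
        show (((b:ℂ) + I * s) / ((b:ℂ) - I * s)).re = _
        rw [Complex.div_re, ez1, ez2, ez3, ez4, ← add_div]
        congr 1
        ring
      have hmim : (m s).im = (2 * b * s.re) / Complex.normSq ((b:ℂ) - I * s) := by
        show (((b:ℂ) + I * s) / ((b:ℂ) - I * s)).im = _
        rw [Complex.div_im, ez1, ez2, ez3, ez4, div_sub_div_same]
        congr 1
        ring
      refine ⟨hnz, ?_, ?_⟩
      · rw [hmre]
        apply div_pos (by nlinarith) hD
      · rw [hmre, hmim, abs_div, _root_.abs_of_pos hD, ← mul_div_assoc,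
          div_lt_div_iff₀ hD hD]
        have habs : |2 * b * s.re| < b * (b ^ 2 - s.re ^ 2 - s.im ^ 2) := by
          rw [abs_lt]
          constructor <;> nlinarith
        nlinarith [abs_nonneg (2 * b * s.re)]
    set q : ℂ → ℂ := fun s => (m s) ^ (c : ℂ) with hqdef
    have hqre : ∀ s ∈ lens γ, 0 < (q s).re := by
      intro s hs
      obtain ⟨hnz, hre, him⟩ := key s hs
      have hm0 : m s ≠ 0 := by
        intro h; rw [h] at hre; simp at hre
      have harg : (m s).arg = Real.arctan ((m s).im / (m s).re) := by
        have h2 : |(m s).arg| < Real.pi / 2 := Complex.abs_arg_lt_pi_div_two_iff.mpr (Or.inl hre)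
        obtain ⟨hl, hr⟩ := abs_lt.mp h2
        rw [← Complex.tan_arg, Real.arctan_tan hl hr]
      have hargbd : |(m s).arg| < α := by
        rw [harg, hadef]
        have h3 : |(m s).im / (m s).re| < b := by
          rw [abs_div, _root_.abs_of_pos hre, div_lt_iff₀ hre]
          exact him
        rw [abs_arctan]
        exact Real.arctan_strictMono h3
      have hcarg : |c * (m s).arg| < Real.pi / 2 := by
        rw [abs_mul, _root_.abs_of_pos hc, ← hcα]
        exact (mul_lt_mul_iff_right₀ hc).mpr hargbd
      obtain ⟨hre', _⟩ := cpow_real_re_im hm0 c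
      rw [hqdef]
      simp only []
      rw [hre']
      apply mul_pos (Real.exp_pos _)
      exact Real.cos_pos_of_mem_Ioo (abs_lt.mp hcarg |> fun h => ⟨h.1, h.2⟩)
    set Φ : ℂ → ℂ := fun s => (q s - 1) / (q s + 1) with hΦdef
    have hΦball : ∀ s ∈ lens γ, ‖Φ s‖ < 1 := by
      intro s hs
      have hre := hqre s hs
      have h2 : ‖1 - q s‖ < ‖1 + q s‖ := norm_one_sub_lt_norm_one_add hre
      rw [hΦdef]
      simp only []
      rw [norm_div, div_lt_one (by
        rw [show q s + 1 = 1 + q s by ring]; linarith [norm_nonneg (1 - q s)])]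
      rw [show q s - 1 = -(1 - q s) by ring, norm_neg, show q s + 1 = 1 + q s by ring]
      exact h2
    have hΦdiff : ∀ s ∈ lens γ, DifferentiableAt ℂ Φ s := by
      intro s hs
      obtain ⟨hnz, hre, _⟩ := key s hs
      have hre' := hqre s hs
      have hmd : DifferentiableAt ℂ m s := by
        rw [hmdef]
        exact DifferentiableAt.div (by fun_prop) (by fun_prop) hnz
      have hqd : DifferentiableAt ℂ q s := by
        apply DifferentiableAt.cpow hmd (differentiableAt_const _)
        exact Or.inl hre
      apply DifferentiableAt.div (hqd.sub_const 1) (hqd.add_const 1)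
      intro h
      have : (q s + 1).re = 0 := by rw [h]; simp
      simp [Complex.add_re] at this
      linarith
    have hzero : (0 : ℂ) ∈ ball (0 : ℂ) 1 := by simp
    have hG0lens : (0 : ℂ) ∈ lens γ := by
      have := hmem 0 hzero; rwa [h0] at this
    have hm0 : m 0 = 1 := by
      rw [hmdef]; simp only [mul_zero, sub_zero, add_zero]
      exact div_self (Complex.ofReal_ne_zero.mpr hb.ne')
    have hq0 : q 0 = 1 := by rw [hqdef]; simp only [hm0, Complex.one_cpow]
    have hΦ0 : Φ 0 = 0 := by rw [hΦdef]; simp [hq0]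
    set h : ℂ → ℂ := fun w => Φ (G w) with hhdef
    have hh0 : h 0 = 0 := by rw [hhdef]; simp only [h0, hΦ0]
    have hhdiff : DifferentiableOn ℂ h (ball (0:ℂ) 1) := by
      intro w hw
      have hGd : DifferentiableAt ℂ G w :=
        hd.differentiableAt (isOpen_ball.mem_nhds hw)
      exact ((hΦdiff (G w) (hmem w hw)).comp w hGd).differentiableWithinAt
    have hmaps : Set.MapsTo h (ball (0:ℂ) 1) (ball (h 0) 1) := by
      intro w hw
      rw [hh0, mem_ball_zero_iff]
      exact hΦball (G w) (hmem w hw)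
    have hschwarz : ‖deriv h 0‖ ≤ 1 / 1 :=
      Complex.norm_deriv_le_div_of_mapsTo_ball hhdiff (hmaps.mono_right ball_subset_closedBall) one_pos
    have hbC : ((b:ℝ) : ℂ) ≠ 0 := Complex.ofReal_ne_zero.mpr hb.ne'
    have hmder : HasDerivAt m (2 * I / b) 0 := by
      have h1 : HasDerivAt (fun s : ℂ => (b:ℂ) + I * s) I 0 := by
        simpa using ((hasDerivAt_id (0:ℂ)).const_mul I).const_add (b:ℂ)
      have h2 : HasDerivAt (fun s : ℂ => (b:ℂ) - I * s) (-I) 0 := by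
        simpa using ((hasDerivAt_id (0:ℂ)).const_mul I).const_sub (b:ℂ)
      have := h1.fun_div h2 (by simpa using hbC)
      rw [hmdef]
      refine this.congr_deriv (Eq.symm ?_)
      field_simp
      ring_nf
      rw [← mul_pow, mul_inv_cancel₀ hbC]
      ring
    have hqder : HasDerivAt q (2 * I * c / b) 0 := by
      have hslit : m 0 ∈ Complex.slitPlane := by
        rw [hm0]; exact Complex.one_mem_slitPlane
      have := hmder.cpow_const (c := (c:ℂ)) hslit
      rw [hqdef]
      convert this using 1
      rw [hm0, Complex.one_cpow]
      field_simp
    have hΦder : HasDerivAt Φ (I * c / b) 0 := by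
      have hN : HasDerivAt (fun s => q s - 1) (2 * I * c / b) 0 := hqder.sub_const 1
      have hD : HasDerivAt (fun s => q s + 1) (2 * I * c / b) 0 := hqder.add_const 1
      have hDne : q 0 + 1 ≠ 0 := by rw [hq0]; norm_num
      have := hN.fun_div hD hDne
      rw [hΦdef]
      refine this.congr_deriv (Eq.symm ?_)
      rw [hq0]
      field_simp
      ring
    have hGder : HasDerivAt G (1/2) 0 := by
      have := (hd.differentiableAt (isOpen_ball.mem_nhds hzero)).hasDerivAt
      rwa [h1] at this
    have hhder : HasDerivAt h (I * c / b * (1/2)) 0 := by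
      have hΦ0' : HasDerivAt Φ (I * c / b) (G 0) := by rw [h0]; exact hΦder
      exact hΦ0'.comp 0 hGder
    have hderval : deriv h 0 = I * c / b * (1/2) := hhder.deriv
    have hnorm : ‖deriv h 0‖ = c / (2 * b) := by
      rw [hderval]
      simp only [norm_mul, norm_div, Complex.norm_I, one_mul, Complex.norm_real,
        Real.norm_eq_abs, _root_.abs_of_pos hc, _root_.abs_of_pos hb, norm_one]
      rw [show ‖(2:ℂ)‖ = 2 by norm_num]
      field_simp
    rw [hnorm] at hschwarz
    have hfin : Real.pi ≤ 4 * α * b := by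
      rw [hcdef] at hschwarz
      have h2b : 0 < 2 * b := by linarith
      rw [div_le_iff₀ h2b] at hschwarz
      have h2α : 0 < 2 * α := by linarith
      rw [div_le_iff₀ h2α] at hschwarz
      nlinarith
    nlinarith
  · -- ============ Part 2: properties of Fmap (π/4) ============
    rw [Fmap_eq]
    set e : ℂ := (((1:ℝ)/2 : ℝ) : ℂ) with he
    have hg0 : ((1 : ℂ) + I * 0) / (1 - I * 0) = 1 := by norm_num
    refine ⟨?_, ?_, ?_, ?_, ?_⟩
    · simp only [hg0]
      rw [Complex.one_cpow]
      simp
    · have h1 : HasDerivAt (fun w : ℂ => 1 + I * w) I 0 := by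
        simpa using ((hasDerivAt_id (0:ℂ)).const_mul I).const_add 1
      have h2 : HasDerivAt (fun w : ℂ => 1 - I * w) (-I) 0 := by
        simpa using ((hasDerivAt_id (0:ℂ)).const_mul I).const_sub 1
      have hg : HasDerivAt (fun w : ℂ => (1 + I * w) / (1 - I * w)) (2 * I) 0 := by
        have := h1.fun_div h2 (by norm_num)
        refine this.congr_deriv (Eq.symm ?_)
        norm_num
        ring
      have hslit : ((1 : ℂ) + I * 0) / (1 - I * 0) ∈ Complex.slitPlane := by
        rw [hg0]; exact Complex.one_mem_slitPlane
      have hq : HasDerivAt (fun w : ℂ => ((1 + I * w) / (1 - I * w)) ^ e) I 0 := by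
        have := hg.cpow_const (c := e) hslit
        convert this using 1
        rw [hg0, Complex.one_cpow]
        rw [he]
        push_cast
        ring
      have hN : HasDerivAt (fun w : ℂ =>
          I * (1 - ((1 + I * w) / (1 - I * w)) ^ e)) (I * (-I)) 0 :=
        (hq.const_sub 1).const_mul I
      have hD : HasDerivAt (fun w : ℂ => 1 + ((1 + I * w) / (1 - I * w)) ^ e) I 0 :=
        hq.const_add 1
      have hF : HasDerivAt (fun w : ℂ =>
          I * (1 - ((1 + I * w) / (1 - I * w)) ^ e) /
            (1 + ((1 + I * w) / (1 - I * w)) ^ e)) (1/2) 0 := by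
        have hDne : (1 : ℂ) + ((1 + I * 0) / (1 - I * 0)) ^ e ≠ 0 := by
          rw [hg0, Complex.one_cpow]; norm_num
        have := hN.fun_div hD hDne
        refine this.congr_deriv (Eq.symm ?_)
        rw [hg0, Complex.one_cpow]
        have : I * -I = 1 := by
          rw [show I * -I = -(I^2) by ring, Complex.I_sq]; norm_num
        norm_num [this]
      exact hF.deriv
    · intro w hw
      rw [mem_ball_zero_iff] at hw
      obtain ⟨hnz, hre⟩ := r_facts hw
      have hqre : 0 < (((1 + I * w) / (1 - I * w)) ^ e).re :=
        lt_of_le_of_lt (abs_nonneg _) (q_facts hw)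
      have hgd : DifferentiableAt ℂ (fun w : ℂ => (1 + I * w) / (1 - I * w)) w := by
        apply DifferentiableAt.div
        · fun_prop
        · fun_prop
        · exact hnz
      have hqd : DifferentiableAt ℂ (fun w : ℂ => ((1 + I * w) / (1 - I * w)) ^ e) w := by
        apply DifferentiableAt.cpow hgd (differentiableAt_const e)
        exact Or.inl hre
      apply DifferentiableAt.differentiableWithinAt
      apply DifferentiableAt.div
      · exact (hqd.const_sub 1).const_mul I
      · exact hqd.const_add 1
      · exact add_one_ne_zero_of_re_pos hqre
    · refine ⟨1, fun w hw => ?_⟩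
      rw [mem_ball_zero_iff] at hw
      have hqre : 0 < (((1 + I * w) / (1 - I * w)) ^ e).re :=
        lt_of_le_of_lt (abs_nonneg _) (q_facts hw)
      set q := ((1 + I * w) / (1 - I * w)) ^ e
      have : ‖I * (1 - q) / (1 + q)‖ = ‖1 - q‖ / ‖1 + q‖ := by
        rw [norm_div, norm_mul, Complex.norm_I, one_mul]
      rw [this]
      apply le_of_lt
      rw [div_lt_one (by
        have := norm_one_sub_lt_norm_one_add hqre
        have h0 : (0:ℝ) ≤ ‖1 - q‖ := norm_nonneg _
        linarith)]
      exact norm_one_sub_lt_norm_one_add hqre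
    · intro w hw
      rw [mem_ball_zero_iff] at hw
      have := lens_core (q_facts hw)
      exact ⟨this.1, this.2⟩
end

section
/- Let G₁, G₂ be bounded holomorphic functions on the unit disc with G_i(0) = 0 and G_i'(0) = 1/2, and suppose sup_{w ∈ 𝔻} σ_max([[1, G₂(w)], [G₁(w), 1]]) = √2. Then G₁ = G₂ = F_{√2}, where F_{√2} is the conformal map of 𝔻 onto Ω_{√2} with F_{√2}(0) = 0, F_{√2}'(0) = 1/2. -/
open Complex Metric

/-- The largest singular value of a 2×2 complex matrix. -/
noncomputable def sigmaMax (M : Matrix (Fin 2) (Fin 2) ℂ) : ℝ :=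
  ‖Matrix.toEuclideanCLM (𝕜 := ℂ) M‖

lemma euclid_norm_sq (y : Fin 2 → ℂ) :
    ‖(WithLp.equiv 2 (Fin 2 → ℂ)).symm y‖ ^ 2 = Complex.normSq (y 0) + Complex.normSq (y 1) := by
  rw [EuclideanSpace.norm_eq, Real.sq_sqrt (by positivity)]
  simp [Fin.sum_univ_two, Complex.sq_norm]

lemma cs_aux (u v b : ℂ) : Complex.normSq (u + b*v)
    ≤ (1 + Complex.normSq b) * (Complex.normSq u + Complex.normSq v) := by
  simp only [Complex.normSq_apply, Complex.add_re, Complex.add_im, Complex.mul_re,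
    Complex.mul_im]
  nlinarith [sq_nonneg (u.re*b.re + u.im*b.im - v.re), sq_nonneg (u.im*b.re - u.re*b.im - v.im)]

lemma sigma_bound {a b : ℂ} {A B : ℝ} (ha : Complex.normSq a ≤ A) (hb : Complex.normSq b ≤ B) :
    sigmaMax !![1, b; a, 1] ≤ Real.sqrt (2 + A + B) := by
  have hA : 0 ≤ A := le_trans (Complex.normSq_nonneg a) ha
  have hB : 0 ≤ B := le_trans (Complex.normSq_nonneg b) hb
  apply ContinuousLinearMap.opNorm_le_bound _ (Real.sqrt_nonneg _)
  intro x
  set y : Fin 2 → ℂ := WithLp.equiv 2 (Fin 2 → ℂ) x with hy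
  have hx : x = (WithLp.equiv 2 (Fin 2 → ℂ)).symm y := rfl
  rw [hx]
  have hTx : Matrix.toEuclideanCLM (𝕜 := ℂ) !![1, b; a, 1] ((WithLp.equiv 2 (Fin 2 → ℂ)).symm y)
      = (WithLp.equiv 2 (Fin 2 → ℂ)).symm (Matrix.mulVec !![1,b;a,1] y) := by
    simp [Matrix.toLin'_apply]
  rw [hTx]
  have e0 : (Matrix.mulVec !![1,b;a,1] y) 0 = y 0 + b * y 1 := by
    simp [Matrix.mulVec, dotProduct, Fin.sum_univ_two]
  have e1 : (Matrix.mulVec !![1,b;a,1] y) 1 = a * y 0 + y 1 := by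
    simp [Matrix.mulVec, dotProduct, Fin.sum_univ_two]
  have hsq : ‖(WithLp.equiv 2 (Fin 2 → ℂ)).symm (Matrix.mulVec !![1,b;a,1] y)‖^2
      ≤ (2 + A + B) * ‖(WithLp.equiv 2 (Fin 2 → ℂ)).symm y‖^2 := by
    rw [euclid_norm_sq, euclid_norm_sq, e0, e1]
    have c1 := cs_aux (y 0) (y 1) b
    have c2 : Complex.normSq (a * y 0 + y 1)
        ≤ (1 + Complex.normSq a) * (Complex.normSq (y 1) + Complex.normSq (y 0)) := by
      have := cs_aux (y 1) (y 0) a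
      calc Complex.normSq (a * y 0 + y 1) = Complex.normSq (y 1 + a * y 0) := by rw [add_comm]
      _ ≤ _ := this
    nlinarith [Complex.normSq_nonneg (y 0), Complex.normSq_nonneg (y 1)]
  apply le_of_pow_le_pow_left₀ two_ne_zero (by positivity)
  rw [mul_pow, Real.sq_sqrt (by linarith : (0:ℝ) ≤ 2+A+B)]
  exact hsq

lemma quad_ineq {a b : ℂ} (h : sigmaMax !![1, b; a, 1] ≤ Real.sqrt 2) (u v : ℂ) :
    Complex.normSq (u + b * v) + Complex.normSq (a * u + v)
      ≤ 2 * (Complex.normSq u + Complex.normSq v) := by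
  set T := Matrix.toEuclideanCLM (𝕜 := ℂ) !![1, b; a, 1] with hT
  set xv := (WithLp.equiv 2 (Fin 2 → ℂ)).symm ![u, v] with hxv
  have hx : ‖T xv‖ ≤ Real.sqrt 2 * ‖xv‖ :=
    (T.le_opNorm xv).trans (mul_le_mul_of_nonneg_right h (norm_nonneg _))
  have hx2 : ‖T xv‖ ^ 2 ≤ 2 * ‖xv‖ ^ 2 := by
    have := pow_le_pow_left₀ (norm_nonneg (T xv)) hx 2
    rwa [mul_pow, Real.sq_sqrt (by norm_num : (0:ℝ) ≤ 2)] at this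
  have hTx : T xv = (WithLp.equiv 2 (Fin 2 → ℂ)).symm (Matrix.mulVec !![1,b;a,1] ![u,v]) := by
    rw [hT, hxv]; simp [Matrix.toLin'_apply]
  rw [hTx, euclid_norm_sq, hxv, euclid_norm_sq] at hx2
  have e0 : (Matrix.mulVec !![1,b;a,1] ![u,v]) 0 = u + b * v := by
    simp [Matrix.mulVec, dotProduct, Fin.sum_univ_two]
  have e1 : (Matrix.mulVec !![1,b;a,1] ![u,v]) 1 = a * u + v := by
    simp [Matrix.mulVec, dotProduct, Fin.sum_univ_two]
  rw [e0, e1] at hx2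
  simpa using hx2

lemma key_ineq {a b : ℂ} (h : sigmaMax !![1, b; a, 1] ≤ Real.sqrt 2) :
    Complex.normSq a ≤ 1 ∧ Complex.normSq b ≤ 1 ∧
      Complex.normSq (a + (starRingEnd ℂ) b)
        ≤ (1 - Complex.normSq a) * (1 - Complex.normSq b) := by
  have ha : Complex.normSq a ≤ 1 := by
    have := quad_ineq h 1 0
    simp [Complex.normSq_one] at this
    linarith
  have hb : Complex.normSq b ≤ 1 := by
    have := quad_ineq h 0 1
    simp [Complex.normSq_one] at this
    linarith
  refine ⟨ha, hb, ?_⟩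
  have hlam : ∀ l : ℝ, 2 * l * Complex.normSq (a + (starRingEnd ℂ) b)
      ≤ l ^ 2 * Complex.normSq (a + (starRingEnd ℂ) b) * (1 - Complex.normSq a)
        + (1 - Complex.normSq b) := by
    intro l
    have H := quad_ineq h ((l : ℂ) * (starRingEnd ℂ) (a + (starRingEnd ℂ) b)) 1
    simp only [Complex.normSq_apply, Complex.add_re, Complex.add_im, Complex.mul_re,
      Complex.mul_im, Complex.conj_re, Complex.conj_im, Complex.ofReal_re, Complex.ofReal_im,
      Complex.one_re, Complex.one_im] at H ⊢
    nlinarith [H]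
  set nt := Complex.normSq (a + (starRingEnd ℂ) b) with hnt
  have hnt0 : 0 ≤ nt := Complex.normSq_nonneg _
  set p := 1 - Complex.normSq a with hp
  set r := 1 - Complex.normSq b with hr
  have hp0 : 0 ≤ p := by linarith
  have hr0 : 0 ≤ r := by linarith
  rcases eq_or_lt_of_le hnt0 with hz | hpos
  · rw [← hz]; positivity
  rcases eq_or_lt_of_le hp0 with hpz | hppos
  · exfalso
    have h1 := hlam ((r + 1) / (2 * nt))
    rw [← hpz] at h1
    have e : 2 * ((r + 1) / (2 * nt)) * nt = r + 1 := by field_simp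
    rw [e] at h1
    nlinarith [h1]
  · have h1 := hlam (1 / p)
    have e1 : 2 * (1 / p) * nt = 2 * (nt / p) := by ring
    have e2 : (1 / p) ^ 2 * nt * p = nt / p := by field_simp
    rw [e1, e2] at h1
    have h3 : nt / p ≤ r := by linarith
    have := (div_le_iff₀ hppos).mp h3
    nlinarith [this]

lemma real_derived {A B Sc Sd Rc Mi : ℝ} (hA : A ≤ 1) (hB : B ≤ 1)
    (hpar : A + B = 2*Sc + 2*Sd) (hSd : 0 ≤ Sd) (hSc : 0 ≤ Sc)
    (hH : 4*Rc^2 + 4*Mi^2 ≤ (1-A)*(1-B)) :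
    4*Rc^2 ≤ (1-Sc)^2 ∧ Sc ≤ 1 ∧ Sd^2 + 4*Rc^2 ≤ (1-Sc)^2 := by
  have huu : 0 ≤ 1 - Sc - Sd := by linarith
  have hAM : (1-A)*(1-B) ≤ (1-Sc-Sd)^2 := by nlinarith [sq_nonneg (A-B)]
  have h4 : 4*Rc^2 ≤ (1-Sc-Sd)^2 := by nlinarith [sq_nonneg Mi]
  have hs : (1-Sc) = (1-Sc-Sd) + Sd := by ring
  refine ⟨?_, by linarith, ?_⟩
  · rw [hs]; nlinarith [mul_nonneg huu hSd, sq_nonneg Sd]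
  · rw [hs]; nlinarith [mul_nonneg huu hSd, sq_nonneg Sd]

lemma derived {a b : ℂ} (h : sigmaMax !![1, b; a, 1] ≤ Real.sqrt 2) :
    4 * ((a+b)/2).re^2 ≤ (1 - Complex.normSq ((a+b)/2))^2 ∧ Complex.normSq ((a+b)/2) ≤ 1 ∧
      (Complex.normSq ((a-b)/2))^2 + 4*((a+b)/2).re^2 ≤ (1 - Complex.normSq ((a+b)/2))^2 := by
  obtain ⟨hA, hB, hm⟩ := key_ineq h
  have hpar : Complex.normSq a + Complex.normSq b
      = 2*Complex.normSq ((a+b)/2) + 2*Complex.normSq ((a-b)/2) := by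
    simp only [Complex.normSq_apply, Complex.add_re, Complex.add_im, Complex.sub_re,
      Complex.sub_im, Complex.div_re, Complex.div_im, Complex.normSq_ofNat]
    norm_num
    ring
  have hH : 4*((a+b)/2).re^2 + 4*((a-b)/2).im^2
      ≤ (1 - Complex.normSq a) * (1 - Complex.normSq b) := by
    have e : Complex.normSq (a + (starRingEnd ℂ) b)
        = 4*((a+b)/2).re^2 + 4*((a-b)/2).im^2 := by
      simp only [Complex.normSq_apply, Complex.add_re, Complex.add_im, Complex.sub_re,
        Complex.sub_im, Complex.div_re, Complex.div_im, Complex.normSq_ofNat,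
        Complex.conj_re, Complex.conj_im]
      norm_num
      ring
    linarith [hm, e.symm.le, e.le]
  exact real_derived hA hB hpar (Complex.normSq_nonneg _) (Complex.normSq_nonneg _) hH

lemma Fmap_pi4 (w : ℂ) :
    Fmap (Real.pi/4) w = I * (1 - ((1 + I * w) / (1 - I * w)) ^ (1/2 : ℂ)) /
      (1 + ((1 + I * w) / (1 - I * w)) ^ (1/2 : ℂ)) := by
  have h1 : Real.tan (Real.pi/4) = 1 := Real.tan_pi_div_four
  have h2 : (2 * (Real.pi/4) / Real.pi : ℝ) = 1/2 := by
    field_simp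
    ring
  rw [Fmap, h1, h2]
  norm_num

section
variable {w : ℂ} (hw : w ∈ ball (0:ℂ) 1)

lemma norm_lt_one (hw : w ∈ ball (0:ℂ) 1) : ‖w‖ < 1 := by
  have := mem_ball_zero_iff.mp hw
  exact this

lemma normSq_lt_one (hw : w ∈ ball (0:ℂ) 1) : Complex.normSq w < 1 := by
  have h1 := norm_lt_one hw
  rw [← Complex.sq_norm]
  nlinarith [norm_nonneg w]

lemma hden_ne (hw : w ∈ ball (0:ℂ) 1) : 1 - I*w ≠ 0 := by
  intro h
  have e : I*w = 1 := by linear_combination -h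
  have h2 : ‖I*w‖ < 1 := by
    rw [norm_mul, Complex.norm_I, one_mul]
    exact norm_lt_one hw
  rw [e] at h2
  simp at h2

lemma hz_re (hw : w ∈ ball (0:ℂ) 1) :
    ((1 + I * w) / (1 - I * w)).re
      = (1 - Complex.normSq w) / Complex.normSq (1 - I*w) := by
  rw [Complex.div_re]
  simp [Complex.normSq_apply]
  ring

lemma hz_re_pos (hw : w ∈ ball (0:ℂ) 1) : 0 < ((1 + I * w) / (1 - I * w)).re := by
  rw [hz_re hw]
  apply div_pos
  · linarith [normSq_lt_one hw]
  · exact Complex.normSq_pos.mpr (hden_ne hw)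

end

lemma zsqrt_ne_zero {z : ℂ} (hz : z ≠ 0) : z ^ (1/2:ℂ) ≠ 0 := by
  simp [Complex.cpow_eq_zero_iff, hz]

lemma q_sq {z : ℂ} (hz : z ≠ 0) : z ^ (1/2:ℂ) * z ^ (1/2:ℂ) = z := by
  rw [← Complex.cpow_add _ _ hz]
  norm_num

lemma q_re_pos {z : ℂ} (hz : 0 < z.re) : 0 < (z ^ (1/2:ℂ)).re := by
  have hz0 : z ≠ 0 := by intro h; rw [h] at hz; simp at hz
  rw [Complex.cpow_def_of_ne_zero hz0, Complex.exp_re]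
  apply mul_pos (Real.exp_pos _)
  apply Real.cos_pos_of_mem_Ioo
  have harg : |Complex.arg z| < Real.pi/2 := Complex.abs_arg_lt_pi_div_two_iff.mpr (Or.inl hz)
  have him : (Complex.log z * (1/2)).im = Complex.arg z / 2 := by
    simp [Complex.log_im]
    ring
  rw [him]
  rw [abs_lt] at harg
  constructor <;> [skip; skip] <;> cases' harg with h1 h2 <;> linarith [Real.pi_pos]

lemma q_normSq {z : ℂ} (hz : z ≠ 0) : Complex.normSq (z ^ (1/2:ℂ)) = ‖z‖ := by
  have h := Complex.norm_cpow_of_ne_zero hz (1/2:ℂ)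
  have him : ((1:ℂ)/2).im = 0 := by norm_num
  have hre : ((1:ℂ)/2).re = 1/2 := by norm_num
  rw [him, hre] at h
  simp at h
  rw [← Complex.sq_norm]
  rw [show ((1:ℂ)/2) = (2⁻¹:ℂ) by norm_num, h]
  rw [← Real.rpow_natCast (‖z‖ ^ (2⁻¹:ℝ)) 2, ← Real.rpow_mul (norm_nonneg z)]
  norm_num

set_option maxHeartbeats 1000000 in
lemma Fmap_props {w : ℂ} (hw : w ∈ ball (0:ℂ) 1) :
    (1 - (Fmap (Real.pi/4) w)^2 ≠ 0) ∧
    2*(Fmap (Real.pi/4) w)/(1-(Fmap (Real.pi/4) w)^2) = w ∧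
    Complex.normSq (Fmap (Real.pi/4) w) < 1 ∧
    (1-Complex.normSq (Fmap (Real.pi/4) w))^2 - 4*(Fmap (Real.pi/4) w).re^2
      ≤ 4*(1-Complex.normSq w) := by
  have hd : 1 - I*w ≠ 0 := hden_ne hw
  set z : ℂ := (1 + I * w) / (1 - I * w) with hzdef
  have hzre : 0 < z.re := hz_re_pos hw
  have hz0 : z ≠ 0 := by intro h; rw [h] at hzre; simp at hzre
  set q : ℂ := z ^ (1/2:ℂ) with hqdef
  have hqre : 0 < q.re := q_re_pos hzre
  have hq2 : q * q = z := q_sq hz0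
  have hnq : Complex.normSq q = ‖z‖ := q_normSq hz0
  have hq2m : q*q*(1-I*w) = 1 + I*w := by
    rw [hq2, hzdef]
    field_simp
  have h1q : (1:ℂ) + q ≠ 0 := by
    intro h
    have : q = -1 := by linear_combination h
    rw [this] at hqre
    norm_num at hqre
  have hF : Fmap (Real.pi/4) w = I*(1-q)/(1+q) := Fmap_pi4 w
  set F : ℂ := Fmap (Real.pi/4) w with hFdef
  have hFq : F * (1+q) = I*(1-q) := by rw [hF]; field_simp
  have hFsq : F^2*(1+q)^2 = -((1-q)^2) := by
    calc F^2*(1+q)^2 = (F*(1+q))^2 := by ring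
    _ = (I*(1-q))^2 := by rw [hFq]
    _ = -((1-q)^2) := by rw [mul_pow, Complex.I_sq]; ring
  have hkey : (1 - F^2)*((1+q)^2*(1-I*w)) = 4 := by
    linear_combination (-(1-I*w))*hFsq + 2*hq2m
  have hne : 1 - F^2 ≠ 0 := by
    intro h
    rw [h, zero_mul] at hkey
    norm_num at hkey
  have hpsi : 2*F/(1-F^2) = w := by
    rw [div_eq_iff hne]
    have hc : ((1+q)^2*(1-I*w)) ≠ 0 := by
      apply mul_ne_zero (pow_ne_zero _ h1q) hd
    apply mul_right_cancel₀ hc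
    linear_combination 2*(1+q)*(1-I*w)*hFq + (-2*I)*hq2m + (-w)*hkey + (-4*w)*Complex.I_sq
  -- normSq computations
  have hNpos : 0 < Complex.normSq (1+q) := Complex.normSq_pos.mpr h1q
  have hN : Complex.normSq (1+q) = 1 + 2*q.re + Complex.normSq q := by
    simp [Complex.normSq_apply]
    ring
  have hnF : Complex.normSq F = Complex.normSq (1-q) / Complex.normSq (1+q) := by
    rw [hF]
    rw [Complex.normSq_div, Complex.normSq_mul, Complex.normSq_I, one_mul]
  have h1mq : Complex.normSq (1-q) = 1 - 2*q.re + Complex.normSq q := by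
    simp only [Complex.normSq_apply, Complex.sub_re, Complex.sub_im, Complex.one_re,
      Complex.one_im]
    ring
  have hF2lt : Complex.normSq F < 1 := by
    rw [hnF, div_lt_one hNpos, hN, h1mq]
    linarith
  refine ⟨hne, hpsi, hF2lt, ?_⟩
  -- the boundary decay estimate
  have hFre : F.re = 2*q.im / Complex.normSq (1+q) := by
    rw [hF]
    rw [Complex.div_re]
    simp only [Complex.mul_re, Complex.mul_im, Complex.normSq_apply, Complex.I_re,
      Complex.I_im, Complex.sub_re, Complex.sub_im, Complex.add_re, Complex.add_im,
      Complex.one_re, Complex.one_im]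
    ring
  have h1mnF : 1 - Complex.normSq F = 4*q.re / Complex.normSq (1+q) := by
    have hden2 : Complex.normSq (1+q) ≠ 0 := ne_of_gt hNpos
    rw [hnF, eq_div_iff hden2, sub_mul, div_mul_cancel₀ _ hden2, h1mq, hN]
    ring
  have hzre2 : z.re = q.re^2 - q.im^2 := by
    rw [← hq2]
    simp [Complex.mul_re]
    ring
  have hg : (1-Complex.normSq F)^2 - 4*F.re^2
      = 16*z.re/(Complex.normSq (1+q))^2 := by
    rw [h1mnF, hFre, hzre2]
    field_simp
    ring
  rw [hg]
  -- now bound 16*z.re/N^2 ≤ 4*(1-normSq w)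
  have hm : z.re = (1 - Complex.normSq w) / Complex.normSq (1 - I*w) := hz_re hw
  have hmpos : 0 < Complex.normSq (1 - I*w) := Complex.normSq_pos.mpr hd
  have habs : ‖1-I*w‖ * ‖z‖ = ‖1+I*w‖ := by
    have hdne : ‖1-I*w‖ ≠ 0 := norm_ne_zero_iff.mpr hd
    rw [hzdef, norm_div]
    field_simp
  have htri : 2 ≤ ‖1-I*w‖ + ‖1+I*w‖ := by
    have := norm_add_le (1-I*w) (1+I*w)
    simp only [show (1-I*w) + (1+I*w) = 2 by ring] at this
    simpa using this
  have hmN4 : 4 ≤ Complex.normSq (1-I*w) * ((1 + ‖z‖)^2) := by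
    have e : Complex.normSq (1-I*w) * ((1 + ‖z‖)^2)
        = (‖1-I*w‖ + ‖1-I*w‖ * ‖z‖)^2 := by
      rw [← Complex.sq_norm]
      ring
    rw [e, habs]
    nlinarith [htri, norm_nonneg (1-I*w), norm_nonneg (1+I*w)]
  have hNge : 1 + ‖z‖ ≤ Complex.normSq (1+q) := by
    rw [hN, hnq]
    linarith
  have hnw : 0 ≤ 1 - Complex.normSq w := le_of_lt (by linarith [normSq_lt_one hw])
  have hzabs : 0 ≤ ‖z‖ := norm_nonneg z
  have hN2 : (1 + ‖z‖)^2 ≤ (Complex.normSq (1+q))^2 := by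
    nlinarith [hzabs, hNge]
  have hfinal : Complex.normSq (1-I*w) * (1 + ‖z‖)^2
      ≤ Complex.normSq (1-I*w) * (Complex.normSq (1+q))^2 :=
    mul_le_mul_of_nonneg_left hN2 hmpos.le
  have h4 : 4 ≤ Complex.normSq (1-I*w) * (Complex.normSq (1+q))^2 := le_trans hmN4 hfinal
  rw [hm]
  have e : 16*((1 - Complex.normSq w)/Complex.normSq (1-I*w))/(Complex.normSq (1+q))^2
      = (16*(1 - Complex.normSq w))/(Complex.normSq (1-I*w) * (Complex.normSq (1+q))^2) := by
    field_simp
  rw [e, div_le_iff₀ (by positivity)]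
  nlinarith [mul_le_mul_of_nonneg_left h4 hnw]

lemma schwarz_id {H : ℂ → ℂ} (hd : DifferentiableOn ℂ H (ball 0 1)) (h0 : H 0 = 0)
    (h1 : deriv H 0 = 1) (hb : ∀ z ∈ ball (0:ℂ) 1, ‖H z‖ ≤ 1) :
    ∀ z ∈ ball (0:ℂ) 1, H z = z := by
  have hmaps : Set.MapsTo H (ball (0:ℂ) 1) (ball (0:ℂ) 1) := by
    intro z hz
    rw [mem_ball_zero_iff]
    rcases lt_or_ge ‖H z‖ 1 with h | h
    · exact h
    · exfalso
      have heq : ‖H z‖ = 1 := le_antisymm (hb z hz) h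
      have hmax : IsMaxOn (norm ∘ H) (ball (0:ℂ) 1) z := by
        intro y hy
        simp only [Function.comp_apply, heq]
        exact hb y hy
      have hconst := Complex.eqOn_of_isPreconnected_of_isMaxOn_norm
        (convex_ball (0:ℂ) 1).isPreconnected isOpen_ball hd hz hmax
      have h00 : H 0 = H z := hconst (mem_ball_self one_pos)
      rw [h0] at h00
      rw [← h00] at heq
      simp at heq
  have hmaps' : Set.MapsTo H (ball (0:ℂ) 1) (ball (H 0) 1) := by rwa [h0]
  have h_z₀ : (0:ℂ) ∈ ball (0:ℂ) 1 := mem_ball_self one_pos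
  have h_eq : ‖dslope H 0 0‖ = 1 / 1 := by
    rw [dslope_same, h1]
    norm_num
  have := Complex.affine_of_mapsTo_ball_of_exists_norm_dslope_eq_div hd (hmaps'.mono_right ball_subset_closedBall) h_z₀ h_eq
  intro z hz
  have hz' := this hz
  simp only [dslope_same, h1, h0, smul_eq_mul] at hz'
  simpa using hz'

lemma vanish {D : ℂ → ℂ} (hd : DifferentiableOn ℂ D (ball 0 1))
    (hb : ∀ z ∈ ball (0:ℂ) 1, ‖D z‖^4 ≤ 4*(1-Complex.normSq z)) :
    ∀ z ∈ ball (0:ℂ) 1, D z = 0 := by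
  intro w hw
  rw [mem_ball_zero_iff] at hw
  have key : ∀ r : ℝ, ‖w‖ < r → r < 1 → ‖D w‖^4 ≤ 4*(1-r^2) := by
    intro r hwr hr1
    have hr0 : 0 < r := lt_of_le_of_lt (norm_nonneg w) hwr
    set C : ℝ := (4*(1-r^2)) ^ ((1:ℝ)/4) with hC
    have hrsq : 0 ≤ 4*(1-r^2) := by nlinarith
    have hC4 : C^4 = 4*(1-r^2) := by
      rw [hC, ← Real.rpow_natCast ((4*(1-r^2)) ^ ((1:ℝ)/4)) 4, ← Real.rpow_mul hrsq]
      norm_num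
    have hCnn : 0 ≤ C := Real.rpow_nonneg hrsq _
    have hsub : closure (ball (0:ℂ) r) ⊆ ball (0:ℂ) 1 := by
      rw [closure_ball _ hr0.ne']
      exact closedBall_subset_ball hr1
    have hdc : DiffContOnCl ℂ D (ball (0:ℂ) r) := (hd.mono hsub).diffContOnCl
    have hfr : ∀ z ∈ frontier (ball (0:ℂ) r), ‖D z‖ ≤ C := by
      intro z hz
      rw [frontier_ball _ hr0.ne'] at hz
      have hzn : ‖z‖ = r := by simpa using hz
      have hzb : z ∈ ball (0:ℂ) 1 := by rw [mem_ball_zero_iff, hzn]; exact hr1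
      have h1 := hb z hzb
      have hns : Complex.normSq z = r^2 := by
        rw [← Complex.sq_norm, hzn]
      rw [hns] at h1
      have := h1.trans_eq hC4.symm
      exact le_of_pow_le_pow_left₀ (by norm_num) hCnn this
    have hin : w ∈ closure (ball (0:ℂ) r) :=
      subset_closure (mem_ball_zero_iff.mpr hwr)
    have hDw := Complex.norm_le_of_forall_mem_frontier_norm_le isBounded_ball hdc hfr hin
    calc ‖D w‖^4 ≤ C^4 := pow_le_pow_left₀ (norm_nonneg _) hDw 4
    _ = 4*(1-r^2) := hC4
  by_contra hne
  have hDw0 : 0 < ‖D w‖ := norm_pos_iff.mpr hne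
  have hpos : 0 < ‖D w‖^4 := by positivity
  set ε := ‖D w‖^4 with hε
  set r : ℝ := max ((‖w‖+1)/2) (1 - ε/16) with hr
  have hrw : ‖w‖ < r := lt_of_lt_of_le (by linarith) (le_max_left _ _)
  have hr1 : r < 1 := by
    apply max_lt
    · linarith
    · linarith
  have h1 := key r hrw hr1
  have hrge : 1 - ε/16 ≤ r := le_max_right _ _
  have hrpos : 0 ≤ r := le_trans (by positivity) (le_max_left _ _)
  nlinarith [h1, hrge, hrpos, hpos]

lemma Hb_aux {s : ℂ} (h : 4*s.re^2 ≤ (1 - Complex.normSq s)^2) : ‖2*s‖ ≤ ‖1 - s^2‖ := by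
  apply le_of_pow_le_pow_left₀ two_ne_zero (norm_nonneg _)
  rw [Complex.sq_norm, Complex.sq_norm]
  simp only [Complex.normSq_apply, Complex.sub_re, Complex.sub_im, Complex.one_re,
    Complex.one_im, pow_two, Complex.mul_re, Complex.mul_im, Complex.re_ofNat,
    Complex.im_ofNat] at h ⊢
  nlinarith [h, sq_nonneg (s.re*s.im)]

theorem uniqueness_of_optimal_pair (G₁ G₂ : ℂ → ℂ)
    (hd₁ : DifferentiableOn ℂ G₁ (ball (0 : ℂ) 1))
    (hd₂ : DifferentiableOn ℂ G₂ (ball (0 : ℂ) 1))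
    (hbdd₁ : ∃ C : ℝ, ∀ w ∈ ball (0 : ℂ) 1, ‖G₁ w‖ ≤ C)
    (hbdd₂ : ∃ C : ℝ, ∀ w ∈ ball (0 : ℂ) 1, ‖G₂ w‖ ≤ C)
    (h01 : G₁ 0 = 0) (h02 : G₂ 0 = 0)
    (h11 : deriv G₁ 0 = 1 / 2) (h12 : deriv G₂ 0 = 1 / 2)
    (hsup : sSup ((fun w : ℂ => sigmaMax !![1, G₂ w; G₁ w, 1]) '' ball (0 : ℂ) 1) =
      Real.sqrt 2) :
    ∀ w ∈ ball (0 : ℂ) 1,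
      G₁ w = Fmap (Real.pi / 4) w ∧ G₂ w = Fmap (Real.pi / 4) w := by
  obtain ⟨C₁, hC₁⟩ := hbdd₁
  obtain ⟨C₂, hC₂⟩ := hbdd₂
  have hbdd : BddAbove ((fun w : ℂ => sigmaMax !![1, G₂ w; G₁ w, 1]) '' ball (0 : ℂ) 1) := by
    refine ⟨Real.sqrt (2 + C₁^2 + C₂^2), ?_⟩
    rintro s ⟨w, hw, rfl⟩
    apply sigma_bound
    · rw [Complex.normSq_eq_norm_sq]
      exact pow_le_pow_left₀ (norm_nonneg _) (hC₁ w hw) 2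
    · rw [Complex.normSq_eq_norm_sq]
      exact pow_le_pow_left₀ (norm_nonneg _) (hC₂ w hw) 2
  have hle : ∀ w ∈ ball (0:ℂ) 1, sigmaMax !![1, G₂ w; G₁ w, 1] ≤ Real.sqrt 2 := by
    intro w hw
    rw [← hsup]
    exact le_csSup hbdd ⟨w, hw, rfl⟩
  have hder := fun (w : ℂ) (hw : w ∈ ball (0:ℂ) 1) => derived (hle w hw)
  -- differentiability and derivative of c := (G₁+G₂)/2
  have hcd : DifferentiableOn ℂ (fun w => (G₁ w + G₂ w)/2) (ball (0:ℂ) 1) :=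
    (hd₁.add hd₂).div_const 2
  have hc0 : (G₁ 0 + G₂ 0)/2 = 0 := by rw [h01, h02]; norm_num
  have hG1' : HasDerivAt G₁ (1/2) 0 := by
    have := (hd₁.differentiableAt (isOpen_ball.mem_nhds (mem_ball_self one_pos))).hasDerivAt
    rwa [h11] at this
  have hG2' : HasDerivAt G₂ (1/2) 0 := by
    have := (hd₂.differentiableAt (isOpen_ball.mem_nhds (mem_ball_self one_pos))).hasDerivAt
    rwa [h12] at this
  have hcd0 : HasDerivAt (fun w => (G₁ w + G₂ w)/2) (1/2) 0 := by
    have := (hG1'.add hG2').div_const 2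
    norm_num at this
    exact this
  -- nonvanishing of 1 - c^2
  have hne : ∀ w ∈ ball (0:ℂ) 1, 1 - ((G₁ w + G₂ w)/2)^2 ≠ 0 := by
    intro w hw h
    have h1 := (hder w hw).1
    have h2 : ((G₁ w + G₂ w)/2 - 1)*((G₁ w + G₂ w)/2 + 1) = 0 := by linear_combination -h
    rcases mul_eq_zero.mp h2 with h3 | h3
    · have e : (G₁ w + G₂ w)/2 = 1 := by linear_combination h3
      rw [e] at h1
      norm_num [Complex.normSq_one] at h1
    · have e : (G₁ w + G₂ w)/2 = -1 := by linear_combination h3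
      rw [e] at h1
      norm_num [Complex.normSq] at h1
  -- the function H
  have hHd : DifferentiableOn ℂ (fun w => 2*((G₁ w + G₂ w)/2) / (1 - ((G₁ w + G₂ w)/2)^2))
      (ball (0:ℂ) 1) := by
    apply DifferentiableOn.div (hcd.const_mul 2)
    · exact (differentiableOn_const 1).sub (hcd.pow 2)
    · exact hne
  have hH0 : 2*((G₁ 0 + G₂ 0)/2) / (1 - ((G₁ 0 + G₂ 0)/2)^2) = 0 := by
    rw [hc0]; norm_num
  have hH1 : deriv (fun w => 2*((G₁ w + G₂ w)/2) / (1 - ((G₁ w + G₂ w)/2)^2)) 0 = 1 := by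
    have hnum : HasDerivAt (fun w => 2*((G₁ w + G₂ w)/2)) 1 0 := by
      have := hcd0.const_mul 2
      norm_num at this
      exact this
    have hpow : HasDerivAt (fun w => ((G₁ w + G₂ w)/2)^2) 0 0 := by
      have := hcd0.pow 2
      rw [hc0] at this
      norm_num at this
      exact this
    have hden : HasDerivAt (fun w => 1 - ((G₁ w + G₂ w)/2)^2) 0 0 := by
      have := hpow.const_sub 1
      norm_num at this
      exact this
    have hd0 : 1 - ((G₁ 0 + G₂ 0)/2)^2 ≠ 0 := by rw [hc0]; norm_num
    have := hnum.div hden hd0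
    rw [hc0] at this
    norm_num at this
    exact this.deriv
  have hHb : ∀ z ∈ ball (0:ℂ) 1, ‖2*((G₁ z + G₂ z)/2) / (1 - ((G₁ z + G₂ z)/2)^2)‖ ≤ 1 := by
    intro z hz
    rw [norm_div]
    exact div_le_one_of_le₀ (Hb_aux (hder z hz).1) (norm_nonneg _)
  have hHeq := schwarz_id hHd hH0 hH1 hHb
  -- c = F pointwise
  have hcF : ∀ w ∈ ball (0:ℂ) 1, (G₁ w + G₂ w)/2 = Fmap (Real.pi/4) w := by
    intro w hw
    obtain ⟨hFne, hFpsi, hFlt, _⟩ := Fmap_props hw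
    have e1 : 2*((G₁ w + G₂ w)/2) = w*(1 - ((G₁ w + G₂ w)/2)^2) :=
      (div_eq_iff (hne w hw)).mp (hHeq w hw)
    have e2 : 2*(Fmap (Real.pi/4) w) = w*(1 - (Fmap (Real.pi/4) w)^2) :=
      (div_eq_iff hFne).mp hFpsi
    have e3 : ((G₁ w + G₂ w)/2 - Fmap (Real.pi/4) w)
        * (1 + ((G₁ w + G₂ w)/2) * Fmap (Real.pi/4) w) = 0 := by
      linear_combination ((1 - (Fmap (Real.pi/4) w)^2)*e1 - (1 - ((G₁ w + G₂ w)/2)^2)*e2)/2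
    rcases mul_eq_zero.mp e3 with h3 | h3
    · linear_combination h3
    · exfalso
      have e4 : ((G₁ w + G₂ w)/2) * Fmap (Real.pi/4) w = -1 := by linear_combination h3
      have e5 := congrArg Complex.normSq e4
      rw [Complex.normSq_mul] at e5
      simp only [Complex.normSq_neg, Complex.normSq_one] at e5
      have hsc := (hder w hw).2.1
      have h6 : (0:ℝ) ≤ Complex.normSq ((G₁ w + G₂ w)/2) := Complex.normSq_nonneg _
      have h7 : (0:ℝ) ≤ Complex.normSq (Fmap (Real.pi/4) w) := Complex.normSq_nonneg _
      nlinarith [e5, hsc, hFlt, h6, h7]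
  -- the difference vanishes
  have hDd : DifferentiableOn ℂ (fun w => (G₁ w - G₂ w)/2) (ball (0:ℂ) 1) :=
    (hd₁.sub hd₂).div_const 2
  have hDb : ∀ z ∈ ball (0:ℂ) 1, ‖(G₁ z - G₂ z)/2‖^4 ≤ 4*(1 - Complex.normSq z) := by
    intro z hz
    have h1 := (hder z hz).2.2
    rw [hcF z hz] at h1
    have h2 := (Fmap_props hz).2.2.2
    have h3 : ‖(G₁ z - G₂ z)/2‖^4 = (Complex.normSq ((G₁ z - G₂ z)/2))^2 := by
      rw [show (4:ℕ) = 2*2 by norm_num, pow_mul, Complex.sq_norm]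
    rw [h3]
    linarith
  have hD0 := vanish hDd hDb
  intro w hw
  have hc' := hcF w hw
  have hd' := hD0 w hw
  constructor
  · linear_combination hc' + hd'
  · linear_combination hc' - hd'
end
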